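/- arXiv:2603.10920 — 7 statements merged into one kernel-verified Lean document; each statement's English description precedes it below -/
import Mathlib

section
/- Let T > 0 and let u ∈ C(ℝⁿ × [0,T)) be a viscosity subsolution of the heat equation ∂_t u = Δu on ℝⁿ × (0,T) with u ≤ 0 on ℝⁿ × {0}. If there exist a, A > 0 with u(x,t) ≤ a e^{A|x|²} on ℝⁿ × [0,T), then u ≤ 0 on ℝⁿ × [0,T). -/
set_option maxHeartbeats 1000000

noncomputable def lap (n : ℕ) (f : EuclideanSpace ℝ (Fin n) → ℝ)
    (x : EuclideanSpace ℝ (Fin n)) : ℝ :=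
  ∑ i : Fin n,
    fderiv ℝ (fun y => fderiv ℝ f y (EuclideanSpace.single i 1)) x (EuclideanSpace.single i 1)

section lapcalc
variable (n : ℕ) (a c e : ℝ)

lemma hasFDerivAt_aexp (y : EuclideanSpace ℝ (Fin n)) :
    HasFDerivAt (fun y : EuclideanSpace ℝ (Fin n) => a * Real.exp (c * ‖y‖^2) + e)
      (a • (Real.exp (c * ‖y‖^2) • (c • ((2:ℕ) • innerSL ℝ y)))) y :=
  ((((hasStrictFDerivAt_norm_sq y).hasFDerivAt.const_mul c).exp).const_mul a).add_const e

lemma fderiv_aexp_apply (y : EuclideanSpace ℝ (Fin n)) (i : Fin n) :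
    fderiv ℝ (fun y : EuclideanSpace ℝ (Fin n) => a * Real.exp (c * ‖y‖^2) + e) y
      (EuclideanSpace.single i 1)
      = a * Real.exp (c * ‖y‖^2) * (c * (2 * y i)) := by
  rw [(hasFDerivAt_aexp n a c e y).fderiv]
  have : (innerSL ℝ y) (EuclideanSpace.single i (1:ℝ)) = y i := by
    simp [EuclideanSpace.inner_single_right]
  simp [this]; ring

lemma lap_aexp (x : EuclideanSpace ℝ (Fin n)) :
    lap n (fun y => a * Real.exp (c * ‖y‖^2) + e) x
      = a * Real.exp (c * ‖x‖^2) * (2*c*n + 4*c^2*‖x‖^2) := by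
  unfold lap
  have key : ∀ i : Fin n,
      fderiv ℝ (fun y : EuclideanSpace ℝ (Fin n) =>
        fderiv ℝ (fun y : EuclideanSpace ℝ (Fin n) => a * Real.exp (c * ‖y‖^2) + e) y
          (EuclideanSpace.single i 1)) x (EuclideanSpace.single i 1)
      = a * Real.exp (c * ‖x‖^2) * (2*c + 4*c^2 * (x i)^2) := by
    intro i
    have heq : (fun y : EuclideanSpace ℝ (Fin n) =>
        fderiv ℝ (fun y : EuclideanSpace ℝ (Fin n) => a * Real.exp (c * ‖y‖^2) + e) y
          (EuclideanSpace.single i 1))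
        = fun y : EuclideanSpace ℝ (Fin n) =>
            (a * Real.exp (c * ‖y‖^2) + e - e) * (c * (2 * y i)) := by
      funext y; rw [fderiv_aexp_apply]; ring
    rw [heq]
    have h1 : ∀ y, HasFDerivAt (fun y : EuclideanSpace ℝ (Fin n) => c * (2 * y i))
        (c • ((2:ℝ) • (EuclideanSpace.proj i : EuclideanSpace ℝ (Fin n) →L[ℝ] ℝ))) y := by
      intro y
      exact HasFDerivAt.const_mul (𝕜 := ℝ)
        (HasFDerivAt.const_mul (𝕜 := ℝ) (EuclideanSpace.proj i).hasFDerivAt (2:ℝ)) c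
    have h0 : HasFDerivAt (fun y : EuclideanSpace ℝ (Fin n) => a * Real.exp (c * ‖y‖^2) + e - e)
        (a • (Real.exp (c * ‖x‖^2) • (c • ((2:ℕ) • innerSL ℝ x)))) x :=
      (hasFDerivAt_aexp n a c e x).sub_const e
    have hm : HasFDerivAt (fun y : EuclideanSpace ℝ (Fin n) =>
        (a * Real.exp (c * ‖y‖^2) + e - e) * (c * (2 * y i))) _ x := h0.mul (h1 x)
    rw [hm.fderiv]
    have hinner : (innerSL ℝ x) (EuclideanSpace.single i (1:ℝ)) = x i := by
      simp [EuclideanSpace.inner_single_right]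
    have hproj : (EuclideanSpace.proj i : EuclideanSpace ℝ (Fin n) →L[ℝ] ℝ)
        (EuclideanSpace.single i (1:ℝ)) = 1 := by simp
    simp [hinner, hproj]; ring
  rw [Finset.sum_congr rfl (fun i _ => key i)]
  rw [← Finset.mul_sum, Finset.sum_add_distrib, Finset.sum_const, ← Finset.mul_sum]
  have hnorm : ∑ i : Fin n, (x i)^2 = ‖x‖^2 := by
    rw [← real_inner_self_eq_norm_sq, PiLp.inner_apply]
    simp [RCLike.inner_apply, sq]
  rw [hnorm]
  push_cast [Finset.card_univ, nsmul_eq_mul, Fintype.card_fin]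
  ring
end lapcalc

lemma exists_cutoff (l h τ : ℝ) (hl : l < τ) (hh : τ < h) :
    ∃ (χ : ℝ → ℝ) (r : ℝ), 0 < r ∧ ContDiff ℝ 2 χ ∧
      (∀ t, |t - τ| ≤ r → χ t = t) ∧ (∀ t, χ t ∈ Set.Ioo l h) := by
  set r : ℝ := min (τ - l) (h - τ) / 3 with hr
  have hrpos : 0 < r := by
    have := lt_min (by linarith : (0:ℝ) < τ - l) (by linarith : (0:ℝ) < h - τ)
    positivity
  refine ⟨fun t => τ + r * ((t - τ)/r * Real.smoothTransition ((4 - ((t-τ)/r)^2)/3)), r,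
    hrpos, ?_, ?_, ?_⟩
  · have h1 : ContDiff ℝ 2 (fun t : ℝ => (t - τ)/r) :=
      (contDiff_id.sub contDiff_const).div_const r
    exact contDiff_const.add (contDiff_const.mul
      (h1.mul ((Real.smoothTransition.contDiff (n := 2)).comp
        ((contDiff_const.sub (h1.pow 2)).div_const 3))))
  · intro t ht
    have hs : |(t - τ)/r| ≤ 1 := by
      rw [abs_div, abs_of_pos hrpos, div_le_one hrpos]; exact ht
    have h4 : (1:ℝ) ≤ (4 - ((t-τ)/r)^2)/3 := by
      have := sq_abs ((t-τ)/r) ▸ pow_le_one₀ (abs_nonneg _) hs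
      nlinarith [sq_abs ((t-τ)/r), sq_nonneg ((t-τ)/r)]
    dsimp only
    rw [Real.smoothTransition.one_of_one_le h4]
    field_simp
    ring
  · intro t
    set s := (t - τ)/r with hs
    have key : |s * Real.smoothTransition ((4 - s^2)/3)| ≤ 2 := by
      rcases le_or_gt (|s|) 2 with hle | hlt
      · calc |s * _| = |s| * |Real.smoothTransition ((4 - s^2)/3)| := abs_mul _ _
          _ ≤ 2 * 1 := by
              apply mul_le_mul hle _ (abs_nonneg _) (by norm_num)
              rw [abs_of_nonneg (Real.smoothTransition.nonneg _)]
              exact Real.smoothTransition.le_one _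
          _ = 2 := by norm_num
      · have : (4 - s^2)/3 ≤ 0 := by nlinarith [sq_abs s]
        rw [Real.smoothTransition.zero_of_nonpos this, mul_zero, abs_zero]; norm_num
    have habs : |r * (s * Real.smoothTransition ((4 - s^2)/3))| ≤ 2 * r := by
      rw [abs_mul, abs_of_pos hrpos]
      calc r * |_| ≤ r * 2 := by exact mul_le_mul_of_nonneg_left key hrpos.le
        _ = 2 * r := by ring
    have h2r : 2 * r < min (τ - l) (h - τ) := by
      rw [hr]; have := lt_min (by linarith : (0:ℝ) < τ - l) (by linarith : (0:ℝ) < h - τ)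
      linarith
    have hmin1 : min (τ - l) (h - τ) ≤ τ - l := min_le_left _ _
    have hmin2 : min (τ - l) (h - τ) ≤ h - τ := min_le_right _ _
    have := abs_le.1 habs
    constructor <;> simp only [Set.mem_Ioo] <;> linarith [this.1, this.2]

lemma step (n : ℕ) (T : ℝ) (u : EuclideanSpace ℝ (Fin n) → ℝ → ℝ)
    (hu : ContinuousOn (fun p : EuclideanSpace ℝ (Fin n) × ℝ => u p.1 p.2)
      (Set.univ ×ˢ Set.Ico 0 T))
    (hsub : ∀ (ψ : EuclideanSpace ℝ (Fin n) → ℝ → ℝ) (ξ : EuclideanSpace ℝ (Fin n)) (τ : ℝ),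
      τ ∈ Set.Ioo 0 T →
      ContDiff ℝ 2 (fun p : EuclideanSpace ℝ (Fin n) × ℝ => ψ p.1 p.2) →
      ψ ξ τ = u ξ τ → (∀ᶠ p in nhds (ξ, τ), u p.1 p.2 ≤ ψ p.1 p.2) →
      deriv (ψ ξ) τ - lap n (fun y => ψ y τ) ξ ≤ 0)
    (a A : ℝ) (ha : 0 < a) (hA : 0 < A)
    (hgrowth : ∀ x, ∀ t ∈ Set.Ico 0 T, u x t ≤ a * Real.exp (A * ‖x‖ ^ 2))
    (s : ℝ) (hs0 : 0 ≤ s) (hsT : s < T) (hus : ∀ x, u x s ≤ 0) :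
    ∀ x t, s < t → t < T → t < s + (12*A)⁻¹ → u x t ≤ 0 := by
  intro x₀ t₀ hst htT htτ
  set T' : ℝ := s + (6*A)⁻¹ with hT'def
  set K : ℝ := 6*A*n with hKdef
  have hK0 : 0 ≤ K := by positivity
  set t₁ : ℝ := min (s + (12*A)⁻¹) ((t₀ + T)/2) with ht₁def
  have hτ₁pos : 0 < (12*A)⁻¹ := by positivity
  have ht₀t₁ : t₀ < t₁ := lt_min htτ (by linarith)
  have ht₁T : t₁ < T := lt_of_le_of_lt (min_le_right _ _) (by linarith)
  have ht₁le : t₁ ≤ s + (12*A)⁻¹ := min_le_left _ _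
  have hst₁ : s < t₁ := lt_trans hst ht₀t₁
  have hinv : (6*A)⁻¹ - (12*A)⁻¹ = (12*A)⁻¹ := by
    field_simp; ring
  have ht₁T' : t₁ < T' := by
    rw [hT'def]
    linarith [hinv, hτ₁pos, ht₁le]
  set cf : ℝ → ℝ := fun t => (4*(T' - t))⁻¹ with hcfdef
  -- bounds on cf
  have hTub : ∀ t, s ≤ t → T' - t ≤ (6*A)⁻¹ := by
    intro t hts; rw [hT'def]; linarith
  have hTlb : ∀ t, t ≤ t₁ → (12*A)⁻¹ ≤ T' - t := by
    intro t htle; rw [hT'def]; linarith [ht₁le, hinv]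
  have hcf_lb : ∀ t, s ≤ t → t ≤ t₁ → 3*A/2 ≤ cf t := by
    intro t h1 h2
    have hb1 : 0 < 4*(T' - t) := by nlinarith [hTlb t h2, hτ₁pos]
    have hb2 : 4*(T' - t) ≤ 4*(6*A)⁻¹ := by linarith [hTub t h1]
    have h3 := inv_anti₀ hb1 hb2
    have h4 : (4*(6*A)⁻¹)⁻¹ = 3*A/2 := by field_simp; ring
    rw [h4] at h3; exact h3
  have hcf_ub : ∀ t, t ≤ t₁ → cf t ≤ 3*A := by
    intro t h2
    have hb0 : 0 < 4*(12*A)⁻¹ := by positivity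
    have hb2 : 4*(12*A)⁻¹ ≤ 4*(T' - t) := by linarith [hTlb t h2]
    have h3 := inv_anti₀ hb0 hb2
    have h4 : (4*(12*A)⁻¹)⁻¹ = 3*A := by field_simp; ring
    rw [h4] at h3; exact h3
  have hcf_pos : ∀ t, t ≤ t₁ → 0 < cf t := by
    intro t h2
    have hb1 : 0 < 4*(T' - t) := by nlinarith [hTlb t h2, hτ₁pos]
    positivity
  -- main claim
  have key : ∀ δ, 0 < δ → ∀ σ, 0 < σ →
      u x₀ t₀ ≤ δ * Real.exp (cf t₀ * ‖x₀‖^2 + K*t₀) + σ * (t₁ - t₀)⁻¹ := by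
    intro δ hδ σ hσ
    by_contra hcon
    push_neg at hcon
    set v : EuclideanSpace ℝ (Fin n) → ℝ → ℝ :=
      fun x t => Real.exp (cf t * ‖x‖^2 + K*t) with hvdef
    set w : EuclideanSpace ℝ (Fin n) → ℝ → ℝ :=
      fun x t => u x t - δ * v x t - σ * (t₁ - t)⁻¹ with hwdef
    have hvpos : ∀ x t, 0 < v x t := fun x t => Real.exp_pos _
    -- choice of R
    set R : ℝ := max ‖x₀‖ (Real.sqrt (2/A * max 0 (Real.log (a/δ)))) with hRdef
    have hR0 : 0 ≤ R := le_trans (norm_nonneg _) (le_max_left _ _)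
    have hRx : ‖x₀‖ ≤ R := le_max_left _ _
    have hRbig : ∀ x : EuclideanSpace ℝ (Fin n), R ≤ ‖x‖ →
        a * Real.exp (A*‖x‖^2) ≤ δ * Real.exp (3*A/2 * ‖x‖^2) := by
      intro x hx
      have hargnn : 0 ≤ 2/A * max 0 (Real.log (a/δ)) := by positivity
      have hsq : 2/A * max 0 (Real.log (a/δ)) ≤ R^2 := by
        have h1 : Real.sqrt (2/A * max 0 (Real.log (a/δ))) ≤ R := le_max_right _ _
        have h2 := pow_le_pow_left₀ (Real.sqrt_nonneg _) h1 2
        rwa [Real.sq_sqrt hargnn] at h2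
      have hq : R^2 ≤ ‖x‖^2 := pow_le_pow_left₀ hR0 hx 2
      have hlog : Real.log (a/δ) ≤ A/2 * ‖x‖^2 := by
        have h2 : Real.log (a/δ) ≤ max 0 (Real.log (a/δ)) := le_max_right _ _
        have h3 : max 0 (Real.log (a/δ)) ≤ A/2 * ‖x‖^2 := by
          have hAq : 2/A * max 0 (Real.log (a/δ)) ≤ ‖x‖^2 := le_trans hsq hq
          have h5 := mul_le_mul_of_nonneg_left hAq (le_of_lt (half_pos hA))
          have h6 : A/2 * (2/A * max 0 (Real.log (a/δ))) = max 0 (Real.log (a/δ)) := by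
            field_simp
          linarith only [h5, h6]
        linarith only [h2, h3]
      have h5 : a/δ ≤ Real.exp (A/2 * ‖x‖^2) :=
        (Real.log_le_iff_le_exp (by positivity)).1 hlog
      have h6 : a ≤ δ * Real.exp (A/2 * ‖x‖^2) := by
        rw [div_le_iff₀ hδ] at h5; linarith only [h5]
      have h7 : Real.exp (3*A/2 * ‖x‖^2) = Real.exp (A/2 * ‖x‖^2) * Real.exp (A * ‖x‖^2) := by
        rw [← Real.exp_add]; ring_nf
      rw [h7]
      calc a * Real.exp (A*‖x‖^2)
          ≤ (δ * Real.exp (A/2 * ‖x‖^2)) * Real.exp (A*‖x‖^2) :=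
            mul_le_mul_of_nonneg_right h6 (Real.exp_pos _).le
        _ = δ * (Real.exp (A/2 * ‖x‖^2) * Real.exp (A * ‖x‖^2)) := by ring
    set C : ℝ := a * Real.exp (A * R^2) with hCdef
    have hC0 : 0 < C := by positivity
    set η : ℝ := min (t₁ - t₀) (σ / C) with hηdef
    have hη0 : 0 < η := lt_min (by linarith only [ht₀t₁]) (div_pos hσ hC0)
    have hη1 : η ≤ t₁ - t₀ := min_le_left _ _
    have hη2 : η * C ≤ σ := by
      have := min_le_right (t₁ - t₀) (σ / C)
      calc η * C ≤ (σ/C) * C := mul_le_mul_of_nonneg_right this hC0.le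
        _ = σ := by field_simp
    set t₂ : ℝ := t₁ - η with ht₂def
    have ht₂t₁ : t₂ < t₁ := by rw [ht₂def]; linarith only [hη0]
    have hst₂ : s < t₂ := by
      rw [ht₂def]; linarith only [hη1, hst]
    -- bound u on the ball
    have hubd : ∀ x : EuclideanSpace ℝ (Fin n), ‖x‖ ≤ R → ∀ t, 0 ≤ t → t < T → u x t ≤ C := by
      intro x hx t h1 h2
      calc u x t ≤ a * Real.exp (A * ‖x‖^2) := hgrowth x t ⟨h1, h2⟩
        _ ≤ C := by
            rw [hCdef]
            have : A * ‖x‖^2 ≤ A * R^2 := mul_le_mul_of_nonneg_left (pow_le_pow_left₀ (norm_nonneg x) hx 2) hA.le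
            exact mul_le_mul_of_nonneg_left (Real.exp_le_exp.2 this) ha.le
    -- compact set
    set Kc : Set (EuclideanSpace ℝ (Fin n) × ℝ) := Metric.closedBall 0 R ×ˢ Set.Icc s t₂
      with hKcdef
    have hKcsub : Kc ⊆ Set.univ ×ˢ Set.Ico 0 T := by
      rintro ⟨x, t⟩ ⟨-, h2⟩
      exact ⟨Set.mem_univ _, ⟨le_trans hs0 h2.1, lt_of_le_of_lt h2.2 (lt_trans ht₂t₁ ht₁T)⟩⟩
    have hKcpt : IsCompact Kc := (isCompact_closedBall 0 R).prod isCompact_Icc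
    have hKne : Kc.Nonempty := ⟨(x₀, t₀), by
      constructor
      · simpa [Metric.mem_closedBall, dist_zero_right] using hRx
      · exact ⟨le_of_lt hst, by rw [ht₂def]; linarith only [hη1]⟩⟩
    have hWcont : ContinuousOn (fun p : EuclideanSpace ℝ (Fin n) × ℝ => w p.1 p.2) Kc := by
      have hc1 : ContinuousOn (fun p : EuclideanSpace ℝ (Fin n) × ℝ => u p.1 p.2) Kc :=
        hu.mono hKcsub
      have hc2 : ContinuousOn (fun p : EuclideanSpace ℝ (Fin n) × ℝ => (4*(T' - p.2))⁻¹) Kc := by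
        apply ContinuousOn.inv₀
        · fun_prop
        · rintro ⟨x, t⟩ ⟨-, h2⟩
          have : t < T' := lt_of_le_of_lt h2.2 (lt_trans ht₂t₁ ht₁T')
          exact ne_of_gt (by linarith only [this])
      have hc3 : ContinuousOn (fun p : EuclideanSpace ℝ (Fin n) × ℝ => (t₁ - p.2)⁻¹) Kc := by
        apply ContinuousOn.inv₀
        · fun_prop
        · rintro ⟨x, t⟩ ⟨-, h2⟩
          have h3 : t < t₁ := lt_of_le_of_lt h2.2 ht₂t₁
          exact ne_of_gt (by linarith only [h3])
      have hc4 : ContinuousOn (fun p : EuclideanSpace ℝ (Fin n) × ℝ =>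
          Real.exp (cf p.2 * ‖p.1‖^2 + K*p.2)) Kc := by
        apply Real.continuous_exp.comp_continuousOn
        apply ContinuousOn.add
        · exact hc2.mul (by fun_prop)
        · fun_prop
      simp only [hwdef, hvdef]
      exact (hc1.sub (continuousOn_const.mul hc4)).sub (continuousOn_const.mul hc3)
    obtain ⟨⟨ξ, τ⟩, hmem, hmax⟩ := hKcpt.exists_isMaxOn hKne hWcont
    set m : ℝ := w ξ τ with hmdef
    have hwx₀ : 0 < w x₀ t₀ := by
      simp only [hwdef, hvdef]; linarith only [hcon]
    have hx₀mem : (x₀, t₀) ∈ Kc := by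
      constructor
      · simpa [Metric.mem_closedBall, dist_zero_right] using hRx
      · exact ⟨le_of_lt hst, by rw [ht₂def]; linarith only [hη1]⟩
    have hm0 : 0 < m := lt_of_lt_of_le hwx₀ (hmax hx₀mem)
    have hξR : ‖ξ‖ ≤ R := by
      have := hmem.1; simpa [Metric.mem_closedBall, dist_zero_right] using this
    have hτmem : τ ∈ Set.Icc s t₂ := hmem.2
    -- global maximality
    have hglob : ∀ x t, s ≤ t → t < t₁ → w x t ≤ m := by
      intro x t h1 h2
      have htT : t < T := lt_trans h2 ht₁T
      by_cases hxR : ‖x‖ ≤ R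
      · by_cases htt₂ : t ≤ t₂
        · exact hmax (Set.mk_mem_prod (by simpa [Metric.mem_closedBall, dist_zero_right]
            using hxR) ⟨h1, htt₂⟩)
        · push_neg at htt₂
          have hb1 : u x t ≤ C := hubd x hxR t (le_trans hs0 h1) htT
          have hb2 : σ * η⁻¹ ≤ σ * (t₁ - t)⁻¹ := by
            have hpos : 0 < t₁ - t := by linarith only [h2]
            have hlt : t₁ - t < η := by rw [ht₂def] at htt₂; linarith only [htt₂]
            exact mul_le_mul_of_nonneg_left (inv_anti₀ hpos (le_of_lt hlt)) hσ.le
          have hb3 : C ≤ σ * η⁻¹ := by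
            rw [show σ * η⁻¹ = σ/η from (div_eq_mul_inv σ η).symm, le_div_iff₀ hη0]
            exact (mul_comm C η) ▸ hη2
          have hw0 : w x t ≤ 0 := by
            simp only [hwdef]
            have hv := mul_pos hδ (hvpos x t)
            linarith only [hb1, hb2, hb3, hv]
          linarith only [hw0, hm0]
      · push_neg at hxR
        have hb1 : u x t ≤ a * Real.exp (A*‖x‖^2) := hgrowth x t ⟨le_trans hs0 h1, htT⟩
        have hb2 : a * Real.exp (A*‖x‖^2) ≤ δ * Real.exp (3*A/2 * ‖x‖^2) :=
          hRbig x (le_of_lt hxR)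
        have hb3 : Real.exp (3*A/2 * ‖x‖^2) ≤ v x t := by
          simp only [hvdef]
          apply Real.exp_le_exp.2
          have h4 : 3*A/2 * ‖x‖^2 ≤ cf t * ‖x‖^2 :=
            mul_le_mul_of_nonneg_right (hcf_lb t h1 (le_of_lt h2)) (sq_nonneg ‖x‖)
          linarith only [h4, mul_nonneg hK0 (le_trans hs0 h1)]
        have hb4 : 0 < σ * (t₁ - t)⁻¹ := by
          have h5 : 0 < t₁ - t := by linarith only [h2]
          exact mul_pos hσ (inv_pos.2 h5)
        have hw0 : w x t ≤ 0 := by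
          simp only [hwdef]
          have h6 := mul_le_mul_of_nonneg_left hb3 hδ.le
          linarith only [hb1, hb2, h6, hb4]
        linarith only [hw0, hm0]
    -- position of τ
    have hτs : s < τ := by
      rcases lt_or_eq_of_le hτmem.1 with h | h
      · exact h
      · exfalso
        have h1 : w ξ s ≤ 0 := by
          simp only [hwdef]
          have h2 := hus ξ
          have h3 := hvpos ξ s
          have h4 : 0 < σ * (t₁ - s)⁻¹ := by
            have h5 : 0 < t₁ - s := by linarith only [hst₁]
            exact mul_pos hσ (inv_pos.2 h5)
          have h6 := mul_pos hδ h3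
          linarith only [h2, h4, h6]
        rw [hmdef, ← h] at hm0
        linarith only [h1, hm0]
    have hτt₁ : τ < t₁ := lt_of_le_of_lt hτmem.2 ht₂t₁
    have hτT : τ < T := lt_trans hτt₁ ht₁T
    have hτ0 : 0 < τ := lt_of_le_of_lt hs0 hτs
    -- cutoff
    obtain ⟨χ, r, hr, hχsm, hχid, hχmem⟩ := exists_cutoff s t₁ τ hτs hτt₁
    have hχτ : χ τ = τ := hχid τ (by simp [hr.le])
    -- test function
    set ψ : EuclideanSpace ℝ (Fin n) → ℝ → ℝ :=
      fun x t => δ * Real.exp (cf (χ t) * ‖x‖^2 + K * χ t) + (σ * (t₁ - χ t)⁻¹ + m) with hψdef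
    have hT'χ : ∀ t, 4*(T' - χ t) ≠ 0 := by
      intro t
      have h1 := (hχmem t).2
      exact ne_of_gt (by linarith only [h1, ht₁T'])
    have ht₁χ : ∀ t, t₁ - χ t ≠ 0 := by
      intro t
      have h1 := (hχmem t).2
      exact ne_of_gt (by linarith only [h1])
    have hψcd : ContDiff ℝ 2 (fun p : EuclideanSpace ℝ (Fin n) × ℝ => ψ p.1 p.2) := by
      simp only [hψdef]
      have hχ2 : ContDiff ℝ 2 (fun p : EuclideanSpace ℝ (Fin n) × ℝ => χ p.2) :=
        hχsm.comp contDiff_snd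
      have hq2 : ContDiff ℝ 2 (fun p : EuclideanSpace ℝ (Fin n) × ℝ => ‖p.1‖^2) :=
        (contDiff_norm_sq (𝕜 := ℝ)).comp contDiff_fst
      have hcf2 : ContDiff ℝ 2 (fun p : EuclideanSpace ℝ (Fin n) × ℝ => (4*(T' - χ p.2))⁻¹) := by
        apply ContDiff.inv
        · exact contDiff_const.mul (contDiff_const.sub hχ2)
        · exact fun p => hT'χ p.2
      have hinv2 : ContDiff ℝ 2 (fun p : EuclideanSpace ℝ (Fin n) × ℝ => (t₁ - χ p.2)⁻¹) := by
        apply ContDiff.inv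
        · exact contDiff_const.sub hχ2
        · exact fun p => ht₁χ p.2
      exact (contDiff_const.mul ((hcf2.mul hq2).add (contDiff_const.mul hχ2)).exp).add
        ((contDiff_const.mul hinv2).add contDiff_const)
    have hψeq : ψ ξ τ = u ξ τ := by
      simp only [hψdef, hχτ, hmdef, hwdef, hvdef, hcfdef]
      ring
    -- eventual domination
    set r' : ℝ := min r (min (τ - s) (t₁ - τ)) with hr'def
    have hr'0 : 0 < r' := lt_min hr (lt_min (sub_pos.2 hτs) (sub_pos.2 hτt₁))
    have hev : ∀ᶠ p : EuclideanSpace ℝ (Fin n) × ℝ in nhds (ξ, τ),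
        u p.1 p.2 ≤ ψ p.1 p.2 := by
      have hmem2 : {p : EuclideanSpace ℝ (Fin n) × ℝ | p.2 ∈ Set.Ioo (τ - r') (τ + r')}
          ∈ nhds (ξ, τ) := by
        apply (isOpen_Ioo.preimage continuous_snd).mem_nhds
        exact ⟨sub_lt_self τ hr'0, lt_add_of_pos_right τ hr'0⟩
      filter_upwards [hmem2] with p hp
      have hab : |p.2 - τ| ≤ r := by
        rw [abs_le]
        have h1 : r' ≤ r := min_le_left _ _
        constructor <;> linarith only [hp.1, hp.2, h1]
      have hps : s ≤ p.2 := by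
        have : r' ≤ τ - s := le_trans (min_le_right _ _) (min_le_left _ _)
        linarith only [hp.1, this]
      have hpt₁ : p.2 < t₁ := by
        have : r' ≤ t₁ - τ := le_trans (min_le_right _ _) (min_le_right _ _)
        linarith only [hp.2, this]
      have hw := hglob p.1 p.2 hps hpt₁
      simp only [hwdef, hvdef] at hw
      simp only [hψdef, hχid p.2 hab]
      linarith only [hw]
    -- apply the subsolution property
    have hfinal := hsub ψ ξ τ ⟨hτ0, hτT⟩ hψcd hψeq hev
    -- compute the time derivative of ψ ξ at τ
    set q : ℝ := ‖ξ‖^2 with hqdef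
    have hT'τpos : 0 < T' - τ := by linarith only [hτt₁, ht₁T']
    have hT'τ : 4*(T' - τ) ≠ 0 := ne_of_gt (by linarith only [hT'τpos])
    have ht₁τpos : 0 < t₁ - τ := by linarith only [hτt₁]
    have ht₁τ : t₁ - τ ≠ 0 := ne_of_gt ht₁τpos
    have h1 : HasDerivAt (fun t : ℝ => T' - t) (-1) τ := by
      simpa using (hasDerivAt_id τ).const_sub T'
    have h2 : HasDerivAt (fun t : ℝ => 4*(T' - t)) (4 * (-1)) τ := h1.const_mul 4
    have h3 : HasDerivAt (fun t : ℝ => (4*(T' - t))⁻¹) (-(4 * (-1)) / (4*(T' - τ))^2) τ :=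
      h2.inv hT'τ
    have h4 := h3.mul_const q
    have h5 : HasDerivAt (fun t : ℝ => K * t) (K * 1) τ := (hasDerivAt_id τ).const_mul K
    have h6 := (h4.add h5).exp
    have h7 := h6.const_mul δ
    have h8 : HasDerivAt (fun t : ℝ => t₁ - t) (-1) τ := by
      simpa using (hasDerivAt_id τ).const_sub t₁
    have h9 := h8.inv ht₁τ
    have h10 := (h9.const_mul σ).add_const m
    have hφ := h7.add h10
    have hevψ : (ψ ξ) =ᶠ[nhds τ]
        (fun t => δ * Real.exp ((4*(T' - t))⁻¹ * q + K*t) + (σ * (t₁ - t)⁻¹ + m)) := by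
      filter_upwards [Ioo_mem_nhds (sub_lt_self τ hr) (lt_add_of_pos_right τ hr)]
        with t ht
      have hab : |t - τ| ≤ r := by
        rw [abs_le]; exact ⟨by linarith only [ht.1], by linarith only [ht.2]⟩
      simp only [hψdef, hχid t hab, hcfdef]
      rw [hqdef]
    have hDval : deriv (ψ ξ) τ
        = δ * (Real.exp ((4*(T' - τ))⁻¹ * q + K*τ) * (-(4 * (-1)) / (4*(T' - τ))^2 * q + K * 1))
          + σ * (-(-1) / (t₁ - τ)^2) := by
      rw [hevψ.deriv_eq]; exact hφ.deriv
    -- compute the laplacian of ψ · τ at ξ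
    have hfunτ : (fun y => ψ y τ)
        = fun y => (δ * Real.exp (K*τ)) * Real.exp ((4*(T' - τ))⁻¹ * ‖y‖^2)
            + (σ * (t₁ - τ)⁻¹ + m) := by
      funext y
      simp only [hψdef, hχτ, hcfdef]
      rw [Real.exp_add]; ring
    have hlapval : lap n (fun y => ψ y τ) ξ
        = (δ * Real.exp (K*τ)) * Real.exp ((4*(T' - τ))⁻¹ * q)
            * (2*((4*(T' - τ))⁻¹)*n + 4*((4*(T' - τ))⁻¹)^2*q) := by
      rw [hfunτ]
      exact lap_aexp n (δ * Real.exp (K*τ)) ((4*(T' - τ))⁻¹) (σ * (t₁ - τ)⁻¹ + m) ξ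
    -- positivity of the heat operator applied to ψ, contradiction
    have hKcf : 2 * ((4*(T' - τ))⁻¹) * (n:ℝ) ≤ K := by
      have hcfτ := hcf_ub τ (le_of_lt hτt₁)
      simp only [hcfdef] at hcfτ
      have hn : (0:ℝ) ≤ n := Nat.cast_nonneg n
      rw [hKdef]
      calc 2*((4*(T' - τ))⁻¹)*(n:ℝ) = (2*((4*(T' - τ))⁻¹))*(n:ℝ) := by ring
        _ ≤ (2*(3*A))*(n:ℝ) := mul_le_mul_of_nonneg_right (by linarith only [hcfτ]) hn
        _ = 6*A*(n:ℝ) := by ring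
    have hposs : 0 < deriv (ψ ξ) τ - lap n (fun y => ψ y τ) ξ := by
      rw [hDval, hlapval]
      have heq : δ * (Real.exp ((4*(T' - τ))⁻¹ * q + K*τ)
            * (-(4 * (-1)) / (4*(T' - τ))^2 * q + K * 1))
          + σ * (-(-1) / (t₁ - τ)^2)
          - (δ * Real.exp (K*τ)) * Real.exp ((4*(T' - τ))⁻¹ * q)
            * (2*((4*(T' - τ))⁻¹)*n + 4*((4*(T' - τ))⁻¹)^2*q)
          = δ * (Real.exp ((4*(T' - τ))⁻¹ * q) * Real.exp (K*τ))
              * (K - 2*((4*(T' - τ))⁻¹)*n)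
            + σ * ((t₁ - τ)^2)⁻¹ := by
        rw [Real.exp_add]
        field_simp
        ring
      rw [heq]
      have hp1 : 0 ≤ δ * (Real.exp ((4*(T' - τ))⁻¹ * q) * Real.exp (K*τ))
          * (K - 2*((4*(T' - τ))⁻¹)*n) :=
        mul_nonneg (mul_nonneg hδ.le (mul_pos (Real.exp_pos _) (Real.exp_pos _)).le)
          (by linarith only [hKcf])
      have hp2 : 0 < σ * ((t₁ - τ)^2)⁻¹ :=
        mul_pos hσ (inv_pos.2 (pow_pos ht₁τpos 2))
      linarith only [hp1, hp2]
    linarith only [hposs, hfinal]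
  -- conclude from the key estimate by letting δ, σ → 0
  by_contra hpos
  push_neg at hpos
  set V : ℝ := Real.exp (cf t₀ * ‖x₀‖^2 + K*t₀) with hVdef
  have hV0 : 0 < V := Real.exp_pos _
  have ht₁t₀ : 0 < t₁ - t₀ := by linarith only [ht₀t₁]
  have h1 := key (u x₀ t₀ / (2*V)) (div_pos hpos (by linarith only [hV0]))
    (u x₀ t₀ * (t₁ - t₀) / 4) (div_pos (mul_pos hpos ht₁t₀) (by norm_num))
  have h2 : (u x₀ t₀ / (2*V)) * V = u x₀ t₀ / 2 := by
    field_simp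
  have h3 : (u x₀ t₀ * (t₁ - t₀) / 4) * (t₁ - t₀)⁻¹ = u x₀ t₀ / 4 := by
    field_simp
  rw [h2, h3] at h1
  linarith only [h1, hpos]

open MeasureTheory

/-- Lemma 2.3 (comparison principle): let `T > 0` and `u ∈ C(ℝⁿ × [0,T))` be a viscosity
subsolution of the heat equation on `ℝⁿ × (0,T)` with `u ≤ 0` at `t = 0` and
`u(x,t) ≤ a e^{A|x|²}`. Then `u ≤ 0` on `ℝⁿ × [0,T)`. -/
theorem stmt_7 (n : ℕ) (T : ℝ) (hT : 0 < T)
    (u : EuclideanSpace ℝ (Fin n) → ℝ → ℝ)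
    (hu : ContinuousOn (fun p : EuclideanSpace ℝ (Fin n) × ℝ => u p.1 p.2)
      (Set.univ ×ˢ Set.Ico 0 T))
    (hsub : ∀ (ψ : EuclideanSpace ℝ (Fin n) → ℝ → ℝ) (ξ : EuclideanSpace ℝ (Fin n)) (τ : ℝ),
      τ ∈ Set.Ioo 0 T →
      ContDiff ℝ 2 (fun p : EuclideanSpace ℝ (Fin n) × ℝ => ψ p.1 p.2) →
      ψ ξ τ = u ξ τ → (∀ᶠ p in nhds (ξ, τ), u p.1 p.2 ≤ ψ p.1 p.2) →
      deriv (ψ ξ) τ - lap n (fun y => ψ y τ) ξ ≤ 0)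
    (h0 : ∀ x, u x 0 ≤ 0)
    (a A : ℝ) (ha : 0 < a) (hA : 0 < A)
    (hgrowth : ∀ x, ∀ t ∈ Set.Ico 0 T, u x t ≤ a * Real.exp (A * ‖x‖ ^ 2)) :
    ∀ x, ∀ t ∈ Set.Ico 0 T, u x t ≤ 0 := by
  have hτp : 0 < (12*A)⁻¹ := by positivity
  have main : ∀ k : ℕ, ∀ x, ∀ t ∈ Set.Ico 0 T, t ≤ k * ((12*A)⁻¹/2) → u x t ≤ 0 := by
    intro k
    induction k with
    | zero =>
      intro x t ht hle
      have h0' : t = 0 := le_antisymm (by simpa using hle) ht.1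
      rw [h0']; exact h0 x
    | succ k ih =>
      intro x t ht hle
      by_cases hk : t ≤ k * ((12*A)⁻¹/2)
      · exact ih x t ht hk
      · push_neg at hk
        have hs0 : (0:ℝ) ≤ k * ((12*A)⁻¹/2) := by positivity
        have hsT : (k:ℝ) * ((12*A)⁻¹/2) < T := lt_trans hk ht.2
        refine step n T u hu hsub a A ha hA hgrowth (k * ((12*A)⁻¹/2)) hs0 hsT
          (fun y => ih y _ ⟨hs0, hsT⟩ le_rfl) x t hk ht.2 ?_
        push_cast at hle
        linarith
  intro x t ht
  obtain ⟨k, hk⟩ := exists_nat_ge (t / ((12*A)⁻¹/2))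
  refine main k x t ht ?_
  rw [div_le_iff₀ (by positivity)] at hk
  linarith
end

section
/- Let H = H(x,t,v,θ,A) be continuous and degenerate elliptic, and for fixed (t,θ) let (x,v,A) ↦ H(x,t,v,θ,A) be convex. Let u be a classical solution of ∂_t u = H(x,t,u,∇u,∇²u) on ℝⁿ × (0,T) with u(x,t) → ∞ as |x| → ∞ for each t ∈ (0,T). For λ ∈ (0,1), define U_λ(x,t) = inf{(1-λ)u(x₀,t) + λu(x₁,t) : x = (1-λ)x₀ + λx₁}. Then U_λ is a viscosity supersolution of the same equation. -/
/-- The Laplacian-type second derivative data: the Hessian matrix of `f : ℝⁿ → ℝ` at `x`. -/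
noncomputable def hess (n : ℕ) (f : EuclideanSpace ℝ (Fin n) → ℝ)
    (x : EuclideanSpace ℝ (Fin n)) : Matrix (Fin n) (Fin n) ℝ :=
  Matrix.of fun i j =>
    fderiv ℝ (fun y => fderiv ℝ f y (EuclideanSpace.single j 1)) x (EuclideanSpace.single i 1)

set_option maxHeartbeats 1000000

open Filter Topology

section helpers

variable {n : ℕ}

private lemma line_hasDerivAt (a h : EuclideanSpace ℝ (Fin n)) (s : ℝ) :
    HasDerivAt (fun s : ℝ => a + s • h) h s := by
  simpa using ((hasDerivAt_id s).smul_const h).const_add a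

private lemma lineDeriv_aux {g : EuclideanSpace ℝ (Fin n) → ℝ}
    (a h : EuclideanSpace ℝ (Fin n)) (s : ℝ) (hg : DifferentiableAt ℝ g (a + s • h)) :
    HasDerivAt (fun s : ℝ => g (a + s • h)) (fderiv ℝ g (a + s • h) h) s := by
  exact hg.hasFDerivAt.comp_hasDerivAt s (line_hasDerivAt a h s)

private lemma secondLine_aux {g : EuclideanSpace ℝ (Fin n) → ℝ} (hg : ContDiff ℝ 2 g)
    (a h w : EuclideanSpace ℝ (Fin n)) (s : ℝ) :
    HasDerivAt (fun s : ℝ => fderiv ℝ g (a + s • h) w)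
      (fderiv ℝ (fderiv ℝ g) (a + s • h) h w) s := by
  have hdg : Differentiable ℝ (fderiv ℝ g) :=
    (hg.fderiv_right (m := 1) (by norm_num)).differentiable (by norm_num)
  have h1 : HasFDerivAt (fun y => fderiv ℝ g y w)
      ((fderiv ℝ (fderiv ℝ g) (a + s • h)).flip w) (a + s • h) := by
    simpa using (hdg (a + s • h)).hasFDerivAt.clm_apply (hasFDerivAt_const w (a + s • h))
  exact h1.comp_hasDerivAt s (line_hasDerivAt a h s)

private lemma hess_apply' {g : EuclideanSpace ℝ (Fin n) → ℝ} (hg : ContDiff ℝ 2 g)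
    (x : EuclideanSpace ℝ (Fin n)) (i j : Fin n) :
    hess n g x i j = fderiv ℝ (fderiv ℝ g) x (EuclideanSpace.single i 1)
      (EuclideanSpace.single j 1) := by
  have hdg : Differentiable ℝ (fderiv ℝ g) :=
    (hg.fderiv_right (m := 1) (by norm_num)).differentiable (by norm_num)
  have h1 : HasFDerivAt (fun y => fderiv ℝ g y (EuclideanSpace.single j 1))
      ((fderiv ℝ (fderiv ℝ g) x).flip (EuclideanSpace.single j 1)) x := by
    simpa using (hdg x).hasFDerivAt.clm_apply
      (hasFDerivAt_const (EuclideanSpace.single j (1:ℝ)) x)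
  simp only [hess, Matrix.of_apply, h1.fderiv]
  rfl

private lemma hess_symm_entries {g : EuclideanSpace ℝ (Fin n) → ℝ} (hg : ContDiff ℝ 2 g)
    (x v w : EuclideanSpace ℝ (Fin n)) :
    fderiv ℝ (fderiv ℝ g) x v w = fderiv ℝ (fderiv ℝ g) x w v := by
  have hdg : Differentiable ℝ (fderiv ℝ g) :=
    (hg.fderiv_right (m := 1) (by norm_num)).differentiable (by norm_num)
  exact second_derivative_symmetric
    (fun y => ((hg.differentiable (by norm_num)) y).hasFDerivAt) (hdg x).hasFDerivAt v w

private lemma hess_herm {g : EuclideanSpace ℝ (Fin n) → ℝ} (hg : ContDiff ℝ 2 g)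
    (x : EuclideanSpace ℝ (Fin n)) : (hess n g x).IsHermitian := by
  refine Matrix.ext fun i j => ?_
  simp only [Matrix.conjTranspose_apply, star_trivial, hess_apply' hg]
  exact hess_symm_entries hg x _ _

private lemma quad_hess {g : EuclideanSpace ℝ (Fin n) → ℝ} (hg : ContDiff ℝ 2 g)
    (x v : EuclideanSpace ℝ (Fin n)) :
    dotProduct (fun i => v i) ((hess n g x).mulVec (fun i => v i))
      = fderiv ℝ (fderiv ℝ g) x v v := by
  have hv : v = ∑ i, v i • EuclideanSpace.single i (1:ℝ) := by
    ext j
    have : (∑ i, v i • EuclideanSpace.single i (1:ℝ)) j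
        = ∑ i, (v i • EuclideanSpace.single i (1:ℝ)) j := by rw [WithLp.ofLp_sum, Finset.sum_apply]
    rw [this]
    simp [EuclideanSpace.single_apply]
  conv_rhs => rw [hv]
  rw [map_sum]
  simp only [map_smul, ContinuousLinearMap.coe_sum', ContinuousLinearMap.coe_smul',
    Finset.sum_apply, Pi.smul_apply, map_sum, ContinuousLinearMap.map_smul_of_tower]
  simp only [dotProduct, Matrix.mulVec, hess_apply' hg, smul_eq_mul, Finset.mul_sum]
  rw [Finset.sum_comm]
  refine Finset.sum_congr rfl fun i _ => Finset.sum_congr rfl fun j _ => by ring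

private lemma second_deriv_test {φ d : ℝ → ℝ} {c : ℝ} (hmin : IsLocalMin φ 0)
    (hφ : ∀ s : ℝ, HasDerivAt φ (d s) s) (hd : HasDerivAt d c 0) (hd0 : d 0 = 0) :
    0 ≤ c := by
  by_contra hc
  push_neg at hc
  have hslope : Tendsto (slope d 0) (𝓝[≠] 0) (𝓝 c) := hasDerivAt_iff_tendsto_slope.1 hd
  have h1 : ∀ᶠ s in 𝓝[>] (0:ℝ), slope d 0 s < 0 :=
    (hslope.mono_left (nhdsWithin_mono _ (fun s hs => ne_of_gt hs))).eventually_lt_const hc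
  obtain ⟨ε, hε, hεs⟩ : ∃ ε ∈ Set.Ioi (0:ℝ), Set.Ioo 0 ε ⊆ {s | slope d 0 s < 0} :=
    mem_nhdsGT_iff_exists_Ioo_subset.1 h1
  obtain ⟨δ, hδ, hδs⟩ := Metric.eventually_nhds_iff.1 hmin
  set r := min (ε / 2) (δ / 2) with hr
  have hr0 : 0 < r := lt_min (by linarith [Set.mem_Ioi.1 hε]) (by linarith)
  have hdneg : ∀ s ∈ Set.Ioo (0:ℝ) r, d s < 0 := by
    intro s hs
    have hsε : s ∈ Set.Ioo 0 ε :=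
      ⟨hs.1, lt_of_lt_of_le hs.2 (le_trans (min_le_left _ _) (by linarith [Set.mem_Ioi.1 hε]))⟩
    have := hεs hsε
    simp only [Set.mem_setOf_eq, slope_def_field] at this
    have hsl : (d s - d 0) / (s - 0) < 0 := by
      simpa [div_eq_inv_mul, slope] using this
    rw [hd0, sub_zero, sub_zero] at hsl
    rcases div_neg_iff.1 hsl with ⟨_, h⟩ | ⟨h, _⟩
    · linarith [hs.1]
    · exact h
  have hanti : StrictAntiOn φ (Set.Icc 0 r) := by
    refine strictAntiOn_of_deriv_neg (convex_Icc _ _)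
      (fun s _ => (hφ s).continuousAt.continuousWithinAt) ?_
    intro s hs
    rw [interior_Icc] at hs
    rw [(hφ s).deriv]
    exact hdneg s hs
  have hφr : φ r < φ 0 := hanti ⟨le_refl 0, le_of_lt hr0⟩ ⟨le_of_lt hr0, le_refl r⟩ hr0
  have : φ 0 ≤ φ r := hδs (by
    simp only [dist_zero_right, Real.norm_eq_abs, abs_of_nonneg (le_of_lt hr0)]
    calc r ≤ δ/2 := min_le_right _ _
      _ < δ := by linarith)
  linarith

end helpers


/-- Proposition 3.1: let `H(x,t,v,θ,A)` be continuous (for `t ∈ (0,T)`), degenerate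
elliptic, and for fixed `(t,θ)` convex in `(x,v,A)`. Let `u` be a classical solution of
`∂ₜu = H(x,t,u,∇u,∇²u)` on `ℝⁿ × (0,T)` with `u(x,t) → ∞` as `|x| → ∞` for each `t`.
Then for `λ ∈ (0,1)` the infimal convolution
`U_λ(x,t) = inf{(1-λ)u(x₀,t) + λu(x₁,t) : x = (1-λ)x₀ + λx₁}`
is a viscosity supersolution of the same equation. -/
theorem stmt_8 (n : ℕ) (T : ℝ) (hT : 0 < T)
    (H : EuclideanSpace ℝ (Fin n) → ℝ → ℝ → EuclideanSpace ℝ (Fin n) →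
      Matrix (Fin n) (Fin n) ℝ → ℝ)
    (hH1 : ContinuousOn
      (fun p : EuclideanSpace ℝ (Fin n) × ℝ × ℝ × EuclideanSpace ℝ (Fin n) ×
          Matrix (Fin n) (Fin n) ℝ =>
        H p.1 p.2.1 p.2.2.1 p.2.2.2.1 p.2.2.2.2)
      {p | p.2.1 ∈ Set.Ioo 0 T})
    (hH2 : ∀ x t v θ, ∀ A B : Matrix (Fin n) (Fin n) ℝ, (B - A).PosSemidef →
      H x t v θ A ≤ H x t v θ B)
    (hH3 : ∀ t ∈ Set.Ioo 0 T, ∀ θ : EuclideanSpace ℝ (Fin n),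
      ConvexOn ℝ Set.univ
        (fun p : EuclideanSpace ℝ (Fin n) × ℝ × Matrix (Fin n) (Fin n) ℝ =>
          H p.1 t p.2.1 θ p.2.2))
    (u : EuclideanSpace ℝ (Fin n) → ℝ → ℝ)
    (hu_cont : ContinuousOn (fun p : EuclideanSpace ℝ (Fin n) × ℝ => u p.1 p.2)
      (Set.univ ×ˢ Set.Ico 0 T))
    (hu_x : ∀ t ∈ Set.Ioo 0 T, ContDiff ℝ 2 (fun x => u x t))
    (hu_t : ∀ x, DifferentiableOn ℝ (u x) (Set.Ioo 0 T))
    (heq : ∀ x, ∀ t ∈ Set.Ioo 0 T,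
      deriv (u x) t = H x t (u x t) (gradient (fun y => u y t) x) (hess n (fun y => u y t) x))
    (hcoerc : ∀ t ∈ Set.Ioo 0 T,
      Filter.Tendsto (fun x => u x t) (Bornology.cobounded _) Filter.atTop)
    (lam : ℝ) (hlam0 : 0 < lam) (hlam1 : lam < 1)
    (U : EuclideanSpace ℝ (Fin n) → ℝ → ℝ)
    (hU : ∀ x t, U x t = sInf {s : ℝ | ∃ x₀ x₁ : EuclideanSpace ℝ (Fin n),
      x = (1 - lam) • x₀ + lam • x₁ ∧ s = (1 - lam) * u x₀ t + lam * u x₁ t}) :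
    ∀ (ψ : EuclideanSpace ℝ (Fin n) → ℝ → ℝ) (ξ : EuclideanSpace ℝ (Fin n)) (τ : ℝ),
      τ ∈ Set.Ioo 0 T →
      ContDiff ℝ 2 (fun p : EuclideanSpace ℝ (Fin n) × ℝ => ψ p.1 p.2) →
      ψ ξ τ = U ξ τ → (∀ᶠ p in nhds (ξ, τ), ψ p.1 p.2 ≤ U p.1 p.2) →
      0 ≤ deriv (ψ ξ) τ -
        H ξ τ (ψ ξ τ) (gradient (fun y => ψ y τ) ξ) (hess n (fun y => ψ y τ) ξ) := by
  intro ψ ξ τ hτ hψ hψeq hψle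
  have h1lam : (0:ℝ) < 1 - lam := by linarith
  have huτ : ContDiff ℝ 2 (fun x => u x τ) := hu_x τ hτ
  have hψτ : ContDiff ℝ 2 (fun y => ψ y τ) := hψ.comp (contDiff_id.prodMk contDiff_const)
  -- lower bounds for u(·,t)
  have hbdd : ∀ t ∈ Set.Ioo 0 T, ∃ c : ℝ, ∀ y, c ≤ u y t := by
    intro t ht
    obtain ⟨x, hx⟩ := ((hu_x t ht).continuous).exists_forall_le
      (by rw [← Metric.cobounded_eq_cocompact]; exact hcoerc t ht)
    exact ⟨u x t, hx⟩
  -- U is at most any admissible value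
  have hUle : ∀ (x : EuclideanSpace ℝ (Fin n)) (t : ℝ), t ∈ Set.Ioo 0 T →
      ∀ x₀ x₁ : EuclideanSpace ℝ (Fin n), x = (1 - lam) • x₀ + lam • x₁ →
      U x t ≤ (1 - lam) * u x₀ t + lam * u x₁ t := by
    intro x t ht x₀ x₁ hx
    rw [hU]
    obtain ⟨c, hc⟩ := hbdd t ht
    refine csInf_le ⟨c, ?_⟩ ⟨x₀, x₁, hx, rfl⟩
    rintro s ⟨y, z', hyz, rfl⟩
    have a1 : 0 ≤ (1-lam)*(u y t - c) := mul_nonneg h1lam.le (sub_nonneg.2 (hc y))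
    have a2 : 0 ≤ lam*(u z' t - c) := mul_nonneg hlam0.le (sub_nonneg.2 (hc z'))
    nlinarith
  -- partner point map
  set z : EuclideanSpace ℝ (Fin n) → EuclideanSpace ℝ (Fin n) :=
    fun y => lam⁻¹ • (ξ - (1 - lam) • y) with hz
  have hconstraint : ∀ y, ξ = (1 - lam) • y + lam • z y := by
    intro y
    rw [hz]
    simp only []
    rw [smul_smul, mul_inv_cancel₀ (ne_of_gt hlam0), one_smul]
    abel
  have hsolve : ∀ x₀ x₁ : EuclideanSpace ℝ (Fin n),
      ξ = (1 - lam) • x₀ + lam • x₁ → x₁ = z x₀ := by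
    intro x₀ x₁ h
    rw [hz]
    simp only []
    rw [h, add_sub_cancel_left, smul_smul, inv_mul_cancel₀ (ne_of_gt hlam0), one_smul]
  -- the function to minimize
  set f : EuclideanSpace ℝ (Fin n) → ℝ := fun y => (1 - lam) * u y τ + lam * u (z y) τ with hf
  have hzc : Continuous z := by rw [hz]; fun_prop
  have hfcont : Continuous f :=
    (continuous_const.mul huτ.continuous).add
      (continuous_const.mul (huτ.continuous.comp hzc))
  have hfcoer : Tendsto f (cocompact _) atTop := by
    obtain ⟨c, hc⟩ := hbdd τ hτ
    have hco : Tendsto (fun x => u x τ) (cocompact _) atTop := by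
      rw [← Metric.cobounded_eq_cocompact]; exact hcoerc τ hτ
    have h2 : Tendsto (fun y => (1 - lam) * u y τ + lam * c) (cocompact _) atTop :=
      tendsto_atTop_add_const_right _ _ (hco.const_mul_atTop h1lam)
    refine tendsto_atTop_mono (fun y => ?_) h2
    have a2 : 0 ≤ lam*(u (z y) τ - c) := mul_nonneg hlam0.le (sub_nonneg.2 (hc (z y)))
    simp only [hf]
    nlinarith
  obtain ⟨a, ha⟩ := hfcont.exists_forall_le hfcoer
  set b := z a with hb
  -- value of U at the touching point
  have hUval : U ξ τ = f a := by
    rw [hU]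
    refine IsLeast.csInf_eq ⟨⟨a, b, hconstraint a, rfl⟩, ?_⟩
    rintro s ⟨x₀, x₁, hc', rfl⟩
    rw [hsolve x₀ x₁ hc']
    exact ha x₀
  have hψξτ : ψ ξ τ = (1 - lam) * u a τ + lam * u b τ := by rw [hψeq, hUval]
  -- eventual inequality along continuous paths
  have hpath : ∀ (γ₀ γ₁ : ℝ → EuclideanSpace ℝ (Fin n)) (tf : ℝ → ℝ) (s₀ : ℝ),
      Continuous γ₀ → Continuous γ₁ → Continuous tf → tf s₀ = τ →
      (1 - lam) • γ₀ s₀ + lam • γ₁ s₀ = ξ →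
      ∀ᶠ s in 𝓝 s₀, ψ ((1 - lam) • γ₀ s + lam • γ₁ s) (tf s) ≤
        (1 - lam) * u (γ₀ s) (tf s) + lam * u (γ₁ s) (tf s) := by
    intro γ₀ γ₁ tf s₀ h0 h1 h2 h3 h4
    have hγ : Continuous fun s => ((1 - lam) • γ₀ s + lam • γ₁ s, tf s) :=
      by fun_prop
    have htend : Tendsto (fun s => ((1 - lam) • γ₀ s + lam • γ₁ s, tf s)) (𝓝 s₀) (𝓝 (ξ, τ)) := by
      have := hγ.tendsto s₀
      rwa [h3, h4] at this
    have hA := htend.eventually hψle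
    have hIoo : ∀ᶠ t in 𝓝 τ, t ∈ Set.Ioo 0 T := isOpen_Ioo.eventually_mem hτ
    have hB : ∀ᶠ s in 𝓝 s₀, tf s ∈ Set.Ioo 0 T := by
      have h2' : Tendsto tf (𝓝 s₀) (𝓝 τ) := by
        have := h2.tendsto s₀; rwa [h3] at this
      exact h2'.eventually hIoo
    filter_upwards [hA, hB] with s hs1 hs2
    exact le_trans hs1 (hUle _ _ hs2 _ _ rfl)
  -- time derivative identity
  have hdu : ∀ x, DifferentiableAt ℝ (u x) τ :=
    fun x => (hu_t x).differentiableAt (Ioo_mem_nhds hτ.1 hτ.2)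
  have hdψξ : DifferentiableAt ℝ (ψ ξ) τ :=
    ((hψ.differentiable (by norm_num)) (ξ, τ)).comp τ
      ((differentiableAt_const _).prodMk differentiableAt_id)
  have hgτmin : IsLocalMin (fun t => (1 - lam) * u a t + lam * u b t - ψ ξ t) τ := by
    have hev := hpath (fun _ => a) (fun _ => b) id τ continuous_const continuous_const
      continuous_id rfl (hconstraint a).symm
    filter_upwards [hev] with t ht
    simp only [id] at ht
    have : ψ ((1 - lam) • a + lam • b) t = ψ ξ t := by rw [← hconstraint a]
    rw [this] at ht
    show (1 - lam) * u a τ + lam * u b τ - ψ ξ τ ≤ (1 - lam) * u a t + lam * u b t - ψ ξ t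
    rw [hψξτ]
    linarith
  have hgD : HasDerivAt (fun t => (1 - lam) * u a t + lam * u b t - ψ ξ t)
      ((1 - lam) * deriv (u a) τ + lam * deriv (u b) τ - deriv (ψ ξ) τ) τ :=
    (((hdu a).hasDerivAt.const_mul _).add ((hdu b).hasDerivAt.const_mul _)).sub hdψξ.hasDerivAt
  have htime : (1 - lam) * deriv (u a) τ + lam * deriv (u b) τ = deriv (ψ ξ) τ := by
    have h0 := hgτmin.deriv_eq_zero
    rw [hgD.deriv] at h0
    linarith
  -- first-order spatial conditions
  have hfda : fderiv ℝ (fun x => u x τ) a = fderiv ℝ (fun y => ψ y τ) ξ := by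
    refine ContinuousLinearMap.ext fun h => ?_
    have hmin : IsLocalMin (fun s : ℝ =>
        (1 - lam) * u (a + s • h) τ + lam * u b τ - ψ (ξ + s • ((1 - lam) • h)) τ) 0 := by
      have hev := hpath (fun s => a + s • h) (fun _ => b) (fun _ => τ) 0
        (continuous_const.add (continuous_id.smul continuous_const)) continuous_const
        continuous_const rfl
        (by show (1 - lam) • (a + (0:ℝ) • h) + lam • b = ξ
            rw [zero_smul, add_zero]; exact (hconstraint a).symm)
      filter_upwards [hev] with s hs
      have hpt : (1 - lam) • (a + s • h) + lam • b = ξ + s • ((1 - lam) • h) := by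
        rw [hconstraint a]
        module
      rw [hpt] at hs
      show (1 - lam) * u (a + (0:ℝ) • h) τ + lam * u b τ - ψ (ξ + (0:ℝ) • ((1 - lam) • h)) τ ≤
        (1 - lam) * u (a + s • h) τ + lam * u b τ - ψ (ξ + s • ((1 - lam) • h)) τ
      have h00 : ξ + (0:ℝ) • ((1 - lam) • h) = ξ := by rw [zero_smul, add_zero]
      have h01 : a + (0:ℝ) • h = a := by rw [zero_smul, add_zero]
      rw [h00, h01, hψξτ]
      linarith
    have d1 := lineDeriv_aux a h 0 ((huτ.differentiable (by norm_num)) _)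
    have d2 := lineDeriv_aux ξ ((1 - lam) • h) 0 ((hψτ.differentiable (by norm_num)) _)
    have hder : HasDerivAt (fun s : ℝ =>
        (1 - lam) * u (a + s • h) τ + lam * u b τ - ψ (ξ + s • ((1 - lam) • h)) τ)
        ((1 - lam) * fderiv ℝ (fun x => u x τ) (a + (0:ℝ) • h) h
          - fderiv ℝ (fun y => ψ y τ) (ξ + (0:ℝ) • ((1 - lam) • h)) ((1 - lam) • h)) 0 := by
      have := ((d1.const_mul (1 - lam)).add_const (lam * u b τ)).sub d2
      exact this
    have h0 := hmin.deriv_eq_zero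
    rw [hder.deriv] at h0
    simp only [zero_smul, add_zero, map_smul, smul_eq_mul] at h0
    have := sub_eq_zero.1 h0
    exact mul_left_cancel₀ (ne_of_gt h1lam) this
  have hfdb : fderiv ℝ (fun x => u x τ) b = fderiv ℝ (fun y => ψ y τ) ξ := by
    refine ContinuousLinearMap.ext fun h => ?_
    have hmin : IsLocalMin (fun s : ℝ =>
        (1 - lam) * u a τ + lam * u (b + s • h) τ - ψ (ξ + s • (lam • h)) τ) 0 := by
      have hev := hpath (fun _ => a) (fun s => b + s • h) (fun _ => τ) 0
        continuous_const (continuous_const.add (continuous_id.smul continuous_const))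
        continuous_const rfl
        (by show (1 - lam) • a + lam • (b + (0:ℝ) • h) = ξ
            rw [zero_smul, add_zero]; exact (hconstraint a).symm)
      filter_upwards [hev] with s hs
      have hpt : (1 - lam) • a + lam • (b + s • h) = ξ + s • (lam • h) := by
        rw [hconstraint a]
        module
      rw [hpt] at hs
      show (1 - lam) * u a τ + lam * u (b + (0:ℝ) • h) τ - ψ (ξ + (0:ℝ) • (lam • h)) τ ≤
        (1 - lam) * u a τ + lam * u (b + s • h) τ - ψ (ξ + s • (lam • h)) τ
      have h00 : ξ + (0:ℝ) • (lam • h) = ξ := by rw [zero_smul, add_zero]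
      have h01 : b + (0:ℝ) • h = b := by rw [zero_smul, add_zero]
      rw [h00, h01, hψξτ]
      linarith
    have d1 := lineDeriv_aux b h 0 ((huτ.differentiable (by norm_num)) _)
    have d2 := lineDeriv_aux ξ (lam • h) 0 ((hψτ.differentiable (by norm_num)) _)
    have hder : HasDerivAt (fun s : ℝ =>
        (1 - lam) * u a τ + lam * u (b + s • h) τ - ψ (ξ + s • (lam • h)) τ)
        (lam * fderiv ℝ (fun x => u x τ) (b + (0:ℝ) • h) h
          - fderiv ℝ (fun y => ψ y τ) (ξ + (0:ℝ) • (lam • h)) (lam • h)) 0 := by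
      have := ((d1.const_mul lam).const_add ((1 - lam) * u a τ)).sub d2
      exact this
    have h0 := hmin.deriv_eq_zero
    rw [hder.deriv] at h0
    simp only [zero_smul, add_zero, map_smul, smul_eq_mul] at h0
    have := sub_eq_zero.1 h0
    exact mul_left_cancel₀ (ne_of_gt hlam0) this
  have hgrada : gradient (fun x => u x τ) a = gradient (fun y => ψ y τ) ξ := by
    simp only [gradient, hfda]
  have hgradb : gradient (fun x => u x τ) b = gradient (fun y => ψ y τ) ξ := by
    simp only [gradient, hfdb]
  -- second-order condition: PSD
  have hpsd : (((1 - lam) • hess n (fun x => u x τ) a + lam • hess n (fun x => u x τ) b)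
      - hess n (fun y => ψ y τ) ξ).PosSemidef := by
    refine Matrix.PosSemidef.of_dotProduct_mulVec_nonneg ?_ ?_
    · refine Matrix.ext fun i j => ?_
      have e1 := hess_herm huτ a
      have e2 := hess_herm huτ b
      have e3 := hess_herm hψτ ξ
      rw [Matrix.IsHermitian] at e1 e2 e3
      simp only [Matrix.conjTranspose_apply, star_trivial, Matrix.sub_apply, Matrix.add_apply,
        Matrix.smul_apply, smul_eq_mul]
      have c1 : hess n (fun x => u x τ) a j i = hess n (fun x => u x τ) a i j := by
        conv_lhs => rw [← e1]
        simp [Matrix.conjTranspose_apply]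
      have c2 : hess n (fun x => u x τ) b j i = hess n (fun x => u x τ) b i j := by
        conv_lhs => rw [← e2]
        simp [Matrix.conjTranspose_apply]
      have c3 : hess n (fun y => ψ y τ) ξ j i = hess n (fun y => ψ y τ) ξ i j := by
        conv_lhs => rw [← e3]
        simp [Matrix.conjTranspose_apply]
      rw [c1, c2, c3]
    · intro v
      set hv : EuclideanSpace ℝ (Fin n) := WithLp.toLp 2 v with hhv
      -- the second derivative data
      set c : ℝ := (1 - lam) * fderiv ℝ (fderiv ℝ (fun x => u x τ)) a hv hv
        + lam * fderiv ℝ (fderiv ℝ (fun x => u x τ)) b hv hv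
        - fderiv ℝ (fderiv ℝ (fun y => ψ y τ)) ξ hv hv with hcdef
      have hkey : 0 ≤ c := by
        set φ : ℝ → ℝ := fun s =>
          (1 - lam) * u (a + s • hv) τ + lam * u (b + s • hv) τ - ψ (ξ + s • hv) τ with hφdef
        set d : ℝ → ℝ := fun s =>
          (1 - lam) * fderiv ℝ (fun x => u x τ) (a + s • hv) hv
          + lam * fderiv ℝ (fun x => u x τ) (b + s • hv) hv
          - fderiv ℝ (fun y => ψ y τ) (ξ + s • hv) hv with hddef
        have hmin : IsLocalMin φ 0 := by
          have hev := hpath (fun s => a + s • hv) (fun s => b + s • hv) (fun _ => τ) 0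
            (continuous_const.add (continuous_id.smul continuous_const))
            (continuous_const.add (continuous_id.smul continuous_const)) continuous_const rfl
            (by show (1 - lam) • (a + (0:ℝ) • hv) + lam • (b + (0:ℝ) • hv) = ξ
                simp only [zero_smul, add_zero]; exact (hconstraint a).symm)
          filter_upwards [hev] with s hs
          have hpt : (1 - lam) • (a + s • hv) + lam • (b + s • hv) = ξ + s • hv := by
            rw [hconstraint a]
            module
          rw [hpt] at hs
          show (1 - lam) * u (a + (0:ℝ) • hv) τ + lam * u (b + (0:ℝ) • hv) τ
            - ψ (ξ + (0:ℝ) • hv) τ ≤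
            (1 - lam) * u (a + s • hv) τ + lam * u (b + s • hv) τ - ψ (ξ + s • hv) τ
          have h00 : ξ + (0:ℝ) • hv = ξ := by rw [zero_smul, add_zero]
          have h01 : a + (0:ℝ) • hv = a := by rw [zero_smul, add_zero]
          have h02 : b + (0:ℝ) • hv = b := by rw [zero_smul, add_zero]
          rw [h00, h01, h02, hψξτ]
          linarith
        have hφd : ∀ s : ℝ, HasDerivAt φ (d s) s := by
          intro s
          have d1 := lineDeriv_aux a hv s ((huτ.differentiable (by norm_num)) _)
          have d2 := lineDeriv_aux b hv s ((huτ.differentiable (by norm_num)) _)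
          have d3 := lineDeriv_aux ξ hv s ((hψτ.differentiable (by norm_num)) _)
          exact ((d1.const_mul (1 - lam)).add (d2.const_mul lam)).sub d3
        have hdc : HasDerivAt d c 0 := by
          have s1 := secondLine_aux huτ a hv hv 0
          have s2 := secondLine_aux huτ b hv hv 0
          have s3 := secondLine_aux hψτ ξ hv hv 0
          have := ((s1.const_mul (1 - lam)).add (s2.const_mul lam)).sub s3
          simp only [zero_smul, add_zero] at this
          exact this
        have hd0 : d 0 = 0 := by
          simp only [hddef, zero_smul, add_zero, hfda, hfdb]
          ring
        exact second_deriv_test hmin hφd hdc hd0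
      -- identify the quadratic form
      have hsv : star v = v := by
        funext i; simp
      rw [hsv]
      have hq1 := quad_hess huτ a hv
      have hq2 := quad_hess huτ b hv
      have hq3 := quad_hess hψτ ξ hv
      have hvv : (fun i => hv i) = v := rfl
      rw [hvv] at hq1 hq2 hq3
      rw [Matrix.sub_mulVec, Matrix.add_mulVec, Matrix.smul_mulVec,
        Matrix.smul_mulVec, dotProduct_sub, dotProduct_add,
        dotProduct_smul, dotProduct_smul, hq1, hq2, hq3]
      rw [hcdef] at hkey
      simp only [smul_eq_mul]
      linarith
  -- final chain
  set A0 := hess n (fun x => u x τ) a with hA0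
  set A1 := hess n (fun x => u x τ) b with hA1
  set Ap := hess n (fun y => ψ y τ) ξ with hAp
  set θ := gradient (fun y => ψ y τ) ξ with hθ
  have hheqa : deriv (u a) τ = H a τ (u a τ) θ A0 := by
    rw [heq a τ hτ, hgrada]
  have hheqb : deriv (u b) τ = H b τ (u b τ) θ A1 := by
    rw [heq b τ hτ, hgradb]
  have hconv := (hH3 τ hτ θ).2 (Set.mem_univ (a, u a τ, A0))
    (Set.mem_univ (b, u b τ, A1)) h1lam.le hlam0.le (by ring)
  have h1 : ((1 - lam) • ((a, u a τ, A0) :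
        EuclideanSpace ℝ (Fin n) × ℝ × Matrix (Fin n) (Fin n) ℝ)
      + lam • ((b, u b τ, A1) :
        EuclideanSpace ℝ (Fin n) × ℝ × Matrix (Fin n) (Fin n) ℝ))
      = (ξ, ψ ξ τ, (1 - lam) • A0 + lam • A1) := by
    simp only [Prod.smul_mk, Prod.mk_add_mk, Prod.mk.injEq, smul_eq_mul]
    exact ⟨(hconstraint a).symm, hψξτ.symm, trivial⟩
  rw [h1] at hconv
  simp only [smul_eq_mul] at hconv
  have hell : H ξ τ (ψ ξ τ) θ Ap ≤ H ξ τ (ψ ξ τ) θ ((1 - lam) • A0 + lam • A1) :=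
    hH2 _ _ _ _ _ _ hpsd
  have hfinal : deriv (ψ ξ) τ = (1 - lam) * H a τ (u a τ) θ A0 + lam * H b τ (u b τ) θ A1 := by
    rw [← htime, hheqa, hheqb]
  linarith
end

section
/- Let F be admissible on [0,∞) with lim_{r→∞} F(r) = ∞, and suppose ∫_{F(1)}^∞ e^{-Az²} f_F(z) dz = ∞ for every A > 0, where f_F is the inverse of F. If φ : ℝⁿ → [0,∞) is continuous, F-convex, and nonconstant, then ∫_{ℝⁿ} e^{-γ|x|²} φ(x) dx = ∞ for every γ > 0 (hence the heat flow starting from φ does not exist). -/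
open MeasureTheory
open scoped ENNReal
set_option maxHeartbeats 1000000



lemma aux_fF (F : ℝ → EReal) (hmono : StrictMonoOn F (Set.Ici 0))
    (hcont : ContinuousOn F (Set.Ioi 0))
    (hnotop : ∀ r : ℝ, 0 ≤ r → F r ≠ ⊤)
    (htop : Filter.Tendsto F Filter.atTop (nhds ⊤))
    (fF : ℝ → ℝ) (hinv : ∀ r : ℝ, 0 < r → fF ((F r).toReal) = r)
    (z₁ : ℝ) (hz₁ : F 1 = (z₁ : EReal)) (z : ℝ) (hz : z₁ ≤ z) :
    ∃ r : ℝ, 1 ≤ r ∧ F r = (z : EReal) ∧ fF z = r := by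
  have hbot : ∀ r : ℝ, 1 ≤ r → F r ≠ ⊥ := by
    intro r hr
    have : (z₁ : EReal) ≤ F r := by
      rw [← hz₁]; exact hmono.monotoneOn (by norm_num) (by norm_num; linarith) hr
    intro h; rw [h] at this; exact (EReal.bot_lt_coe z₁).not_ge this
  set G : ℝ → ℝ := fun r => (F r).toReal with hG
  have hGcont : ContinuousOn G (Set.Ici 1) := by
    intro r hr
    have h1 : ContinuousWithinAt F (Set.Ici 1) r :=
      (hcont.mono (fun x hx => (lt_of_lt_of_le (one_pos : (0:ℝ) < 1) (Set.mem_Ici.1 hx) : x ∈ Set.Ioi (0:ℝ)))).continuousWithinAt hr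
    exact (EReal.tendsto_toReal (hnotop r (by linarith [hr.out])) (hbot r hr.out)).comp h1
  -- find b with G b ≥ z
  obtain ⟨b, hb⟩ : ∃ b : ℝ, 1 ≤ b ∧ z ≤ G b := by
    have := EReal.tendsto_nhds_top_iff_real.1 htop z
    rcases (this.and (Filter.eventually_ge_atTop (1:ℝ))).exists with ⟨b, hb1, hb2⟩
    refine ⟨b, hb2, ?_⟩
    have := EReal.toReal_le_toReal hb1.le (EReal.coe_ne_bot z) (hnotop b (by linarith))
    simpa using this
  have hG1 : G 1 = z₁ := by simp [hG, hz₁]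
  have hmem : z ∈ Set.Icc (G 1) (G b) := ⟨by rw [hG1]; exact hz, hb.2⟩
  obtain ⟨r, hr, hGr⟩ := intermediate_value_Icc hb.1 (hGcont.mono Set.Icc_subset_Ici_self) hmem
  refine ⟨r, hr.1, ?_, ?_⟩
  · rw [← hGr, hG, EReal.coe_toReal (hnotop r (by linarith [hr.1])) (hbot r hr.1)]
  · rw [← hGr]; exact hinv r (by linarith [hr.1])

lemma aux_ray {n : ℕ} (F : ℝ → EReal) (φ : EuclideanSpace ℝ (Fin n) → ℝ)
    (hφ0 : ∀ x, 0 ≤ φ x) (hnotop : ∀ r : ℝ, 0 ≤ r → F r ≠ ⊤)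
    (hFconv : ∀ x y : EuclideanSpace ℝ (Fin n), ∀ lam : ℝ, 0 < lam → lam < 1 →
      F (φ ((1 - lam) • x + lam • y)) ≤
        ((1 - lam : ℝ) : EReal) * F (φ x) + ((lam : ℝ) : EReal) * F (φ y))
    (a y : EuclideanSpace ℝ (Fin n)) (c κ t : ℝ) (hc : F (φ a) = (c : EReal))
    (hy : ((c + κ : ℝ) : EReal) ≤ F (φ y)) (hκ : 0 < κ) (ht : 1 ≤ t) :
    ((c + t * κ : ℝ) : EReal) ≤ F (φ (a + t • (y - a))) := by
  rcases eq_or_lt_of_le ht with h1 | h1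
  · rw [← h1, one_smul]
    have : a + (y - a) = y := by abel
    rw [this, one_mul]; exact hy
  · set xt := a + t • (y - a) with hxt
    have ht0 : 0 < t := by linarith
    have hkey : (1 - 1/t) • a + (1/t) • xt = y := by
      rw [hxt]
      match_scalars <;> (field_simp; try ring)
    have hconv := hFconv a xt (1/t) (by positivity) (by rw [div_lt_one ht0]; linarith)
    rw [hkey] at hconv
    have hG : F (φ xt) ≠ ⊤ := hnotop _ (hφ0 _)
    have hGbot : F (φ xt) ≠ ⊥ := by
      intro hb
      rw [hb] at hconv
      rw [hc] at hconv
      have h2 : ((1/t : ℝ) : EReal) * (⊥ : EReal) = ⊥ :=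
        EReal.coe_mul_bot_of_pos (by positivity)
      rw [h2] at hconv
      have h3 : ((1 - 1/t : ℝ) : EReal) * ((c : ℝ) : EReal) + (⊥ : EReal) = ⊥ := by
        rw [← EReal.coe_mul]; exact EReal.add_bot _
      rw [h3] at hconv
      exact ((EReal.bot_lt_coe (c + κ)).not_ge (le_trans hy hconv)).elim
    obtain ⟨g, hg⟩ : ∃ g : ℝ, F (φ xt) = (g : EReal) :=
      ⟨(F (φ xt)).toReal, (EReal.coe_toReal hG hGbot).symm⟩
    rw [hg, hc] at hconv
    rw [hg]
    have hcoe : ((1 - 1/t : ℝ) : EReal) * ((c:ℝ) : EReal) + ((1/t : ℝ) : EReal) * ((g:ℝ) : EReal)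
        = (((1 - 1/t) * c + (1/t) * g : ℝ) : EReal) := by
      rw [← EReal.coe_mul, ← EReal.coe_mul, ← EReal.coe_add]
    rw [hcoe] at hconv
    have h4 : c + κ ≤ (1 - 1/t) * c + (1/t) * g := EReal.coe_le_coe_iff.1 (le_trans hy hconv)
    rw [EReal.coe_le_coe_iff]
    have h5 : t * (c + κ) ≤ t * ((1 - 1/t) * c + (1/t) * g) := by nlinarith
    have h6 : t * ((1 - 1/t) * c + (1/t) * g) = (t - 1) * c + g := by field_simp
    nlinarith

lemma aux_sum (fF : ℝ → ℝ) (z₁ : ℝ)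
    (hf1 : ∀ z, z₁ ≤ z → 1 ≤ fF z)
    (hfmono : ∀ z z', z₁ ≤ z → z ≤ z' → fF z ≤ fF z')
    (hdiv : ∀ A : ℝ, 0 < A →
      ∫⁻ z in Set.Ici z₁, ENNReal.ofReal (Real.exp (-A * z ^ 2) * fF z) = ⊤)
    (γ C L c κ : ℝ) (hγ : 0 < γ) (hC : 0 < C) (hL : 0 < L) (hκ : 0 < κ)
    (K : ℕ) (hK1 : 1 ≤ K) (hKz : z₁ ≤ c + κ * K) (hKc : 0 ≤ c + κ * K / 2) :
    ∑' k : ℕ, ENNReal.ofReal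
      (Real.exp (-γ * (C + (K + k : ℕ) * L) ^ 2) * fF (c + κ * (K + k : ℕ))) = ⊤ := by
  classical
  obtain ⟨E, hE⟩ : ∃ E : ℝ, E = C + 2 * L := ⟨_, rfl⟩
  have hE0 : 0 < E := by rw [hE]; positivity
  obtain ⟨A, hA⟩ : ∃ A : ℝ, A = 4 * γ * E ^ 2 / κ ^ 2 + 1 := ⟨_, rfl⟩
  have hA0 : 0 < A := by rw [hA]; positivity
  obtain ⟨zf, hzf⟩ : ∃ zf : ℕ → ℝ, zf = fun j : ℕ => c + κ * (j:ℝ) := ⟨_, rfl⟩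
  obtain ⟨w, hw⟩ : ∃ w : ℕ → ℝ≥0∞, w = fun j : ℕ =>
    ENNReal.ofReal (Real.exp (-γ * (C + (j:ℝ) * L) ^ 2) * fF (zf j)) := ⟨_, rfl⟩
  have hzmono : ∀ j j' : ℕ, j ≤ j' → zf j ≤ zf j' := by
    intro j j' h
    have : (j : ℝ) ≤ (j' : ℝ) := by exact_mod_cast h
    simp only [hzf]
    nlinarith
  have hzK : z₁ ≤ zf K := by simp only [hzf]; exact hKz
  have hzge : ∀ j : ℕ, K ≤ j → κ * ↑j / 2 ≤ zf j := by
    intro j hj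
    have : (K : ℝ) ≤ (j : ℝ) := by exact_mod_cast hj
    simp only [hzf]; nlinarith
  have hzpos : ∀ j : ℕ, K ≤ j → 0 ≤ zf j := by
    intro j hj
    have h1 := hzge j hj
    have h2 : (0:ℝ) ≤ κ * ↑j / 2 := by positivity
    exact le_trans h2 h1
  have hz1le : ∀ j : ℕ, K ≤ j → z₁ ≤ zf j := fun j hj => le_trans hzK (hzmono K j hj)
  -- key exponent inequality
  have hexp : ∀ j : ℕ, K ≤ j → γ * (C + ((j:ℝ) + 1) * L) ^ 2 ≤ A * zf j ^ 2 := by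
    intro j hj
    have hj1 : (1:ℝ) ≤ (j:ℝ) := by
      have : (1:ℕ) ≤ j := le_trans hK1 hj
      exact_mod_cast this
    have h1 : C + ((j:ℝ) + 1) * L ≤ E * j := by
      rw [hE]; nlinarith
    have h5 : 0 ≤ C + ((j:ℝ)+1) * L := by positivity
    have h4 : γ * (C + ((j:ℝ)+1) * L)^2 ≤ γ * (E * j)^2 :=
      mul_le_mul_of_nonneg_left (pow_le_pow_left₀ h5 h1 2) hγ.le
    have hκ0 : κ ≠ 0 := ne_of_gt hκ
    have h6 : A * (κ * ↑j / 2)^2 = γ * (E*j)^2 + (κ * ↑j / 2)^2 := by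
      rw [hA]
      field_simp
      ring
    have h2 : κ * ↑j / 2 ≤ zf j := hzge j hj
    have h3 : 0 ≤ κ * ↑j / 2 := by positivity
    have h7 : A * (κ * ↑j / 2)^2 ≤ A * zf j ^ 2 :=
      mul_le_mul_of_nonneg_left (pow_le_pow_left₀ h3 h2 2) hA0.le
    linarith [sq_nonneg (κ * ↑j / 2)]
  -- split the integral
  have hsplit := hdiv A hA0
  have hIci : Set.Ici z₁ = Set.Ico z₁ (zf K) ∪ Set.Ici (zf K) :=
    (Set.Ico_union_Ici_eq_Ici hzK).symm
  rw [hIci, lintegral_union measurableSet_Ici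
    (by rw [Set.disjoint_left]; rintro z ⟨_, h2⟩ h3; exact absurd (Set.mem_Ici.1 h3) (not_le.2 h2))] at hsplit
  have hfin : ∫⁻ z in Set.Ico z₁ (zf K), ENNReal.ofReal (Real.exp (-A * z ^ 2) * fF z) ≠ ⊤ := by
    have hb : ∀ z ∈ Set.Ico z₁ (zf K), ENNReal.ofReal (Real.exp (-A * z ^ 2) * fF z)
        ≤ ENNReal.ofReal (fF (zf K)) := by
      intro z hz
      apply ENNReal.ofReal_le_ofReal
      have he : Real.exp (-A * z^2) ≤ 1 := by
        rw [Real.exp_le_one_iff]; nlinarith [sq_nonneg z]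
      have hm : fF z ≤ fF (zf K) := hfmono z (zf K) hz.1 hz.2.le
      have h1 : 0 ≤ fF z := le_trans zero_le_one (hf1 z hz.1)
      nlinarith [Real.exp_pos (-A * z^2)]
    have hle : ∫⁻ z in Set.Ico z₁ (zf K), ENNReal.ofReal (Real.exp (-A * z ^ 2) * fF z)
        ≤ ENNReal.ofReal (fF (zf K)) * volume (Set.Ico z₁ (zf K)) :=
      le_trans (setLIntegral_mono measurable_const hb) (le_of_eq (setLIntegral_const _ _))
    exact ne_top_of_le_ne_top
      (ENNReal.mul_ne_top ENNReal.ofReal_ne_top (by simp [Real.volume_Ico])) hle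
  have htail : ∫⁻ z in Set.Ici (zf K), ENNReal.ofReal (Real.exp (-A * z ^ 2) * fF z) = ⊤ :=
    (ENNReal.add_eq_top.1 hsplit).resolve_left hfin
  -- decompose the tail as a union of Ico's
  have hUnion : Set.Ici (zf K) = ⋃ k : ℕ, Set.Ico (zf (K + k)) (zf (K + k + 1)) := by
    ext z
    simp only [Set.mem_Ici, Set.mem_iUnion, Set.mem_Ico]
    constructor
    · intro hz
      set k : ℕ := ⌊(z - zf K) / κ⌋.toNat with hk
      have h0 : 0 ≤ (z - zf K) / κ := div_nonneg (by linarith) hκ.le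
      have hkk : (k : ℝ) = ⌊(z - zf K) / κ⌋ := by
        rw [hk]; exact_mod_cast Int.toNat_of_nonneg (Int.floor_nonneg.2 h0)
      have hfl := Int.floor_le ((z - zf K) / κ)
      have hfl2 := Int.lt_floor_add_one ((z - zf K) / κ)
      rw [← hkk] at hfl hfl2
      have hl : (k:ℝ) * κ ≤ z - zf K := by
        rw [← le_div_iff₀ hκ]; linarith
      have hr : z - zf K < ((k:ℝ) + 1) * κ := by
        rw [← div_lt_iff₀ hκ]; linarith
      refine ⟨k, ?_, ?_⟩
      · simp only [hzf]; push_cast; simp only [hzf] at hl; nlinarith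
      · simp only [hzf]; push_cast; simp only [hzf] at hr; nlinarith
    · rintro ⟨k, h1, h2⟩
      exact le_trans (hzmono K (K + k) (by omega)) h1
  rw [hUnion, lintegral_iUnion (fun k => measurableSet_Ico) ?_] at htail
  swap
  · intro i j hij
    simp only [Function.onFun]
    rw [Set.Ico_disjoint_Ico]
    rcases lt_or_gt_of_ne hij with h | h
    · exact le_trans (min_le_left _ _) (le_trans (hzmono _ _ (by omega)) (le_max_right _ _))
    · exact le_trans (min_le_right _ _) (le_trans (hzmono _ _ (by omega)) (le_max_left _ _))
  -- bound each piece
  have hpiece : ∀ k : ℕ,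
      (∫⁻ z in Set.Ico (zf (K + k)) (zf (K + k + 1)),
        ENNReal.ofReal (Real.exp (-A * z ^ 2) * fF z)) ≤ w (K + k + 1) * ENNReal.ofReal κ := by
    intro k
    have hKk : K ≤ K + k := by omega
    have hb : ∀ z ∈ Set.Ico (zf (K + k)) (zf (K + k + 1)),
        ENNReal.ofReal (Real.exp (-A * z ^ 2) * fF z)
        ≤ ENNReal.ofReal (Real.exp (-γ * (C + ((K+k+1:ℕ):ℝ) * L) ^ 2) * fF (zf (K+k+1))) := by
      intro z hz
      apply ENNReal.ofReal_le_ofReal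
      have hz0 : 0 ≤ zf (K+k) := hzpos _ hKk
      have hz1 : z₁ ≤ z := le_trans (hz1le _ hKk) hz.1
      have he1 : Real.exp (-A * z^2) ≤ Real.exp (-A * zf (K+k) ^2) := by
        apply Real.exp_le_exp.2
        have := mul_le_mul_of_nonneg_left (pow_le_pow_left₀ hz0 hz.1 2) hA0.le
        linarith
      have he2 : Real.exp (-A * zf (K+k) ^2) ≤ Real.exp (-γ * (C + ((K+k+1:ℕ):ℝ) * L) ^ 2) := by
        apply Real.exp_le_exp.2
        have := hexp (K+k) hKk
        push_cast
        push_cast at this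
        linarith
      have hm : fF z ≤ fF (zf (K+k+1)) := hfmono z _ hz1 hz.2.le
      have h1 : 0 ≤ fF z := le_trans zero_le_one (hf1 z hz1)
      nlinarith [Real.exp_pos (-A * z^2), Real.exp_pos (-γ * (C + ((K+k+1:ℕ):ℝ) * L) ^ 2)]
    calc (∫⁻ z in Set.Ico (zf (K + k)) (zf (K + k + 1)),
          ENNReal.ofReal (Real.exp (-A * z ^ 2) * fF z))
        ≤ ∫⁻ _ in Set.Ico (zf (K + k)) (zf (K + k + 1)),
            ENNReal.ofReal (Real.exp (-γ * (C + ((K+k+1:ℕ):ℝ) * L) ^ 2) * fF (zf (K+k+1))) :=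
          setLIntegral_mono measurable_const hb
      _ = ENNReal.ofReal (Real.exp (-γ * (C + ((K+k+1:ℕ):ℝ) * L) ^ 2) * fF (zf (K+k+1)))
            * volume (Set.Ico (zf (K + k)) (zf (K + k + 1))) := setLIntegral_const _ _
      _ = w (K + k + 1) * ENNReal.ofReal κ := by
          rw [Real.volume_Ico, hw]
          have h9 : zf (K + k + 1) - zf (K + k) = κ := by
            simp only [hzf]; push_cast; ring
          rw [h9]
  -- conclude
  have hsum1 : (⊤ : ℝ≥0∞) ≤ (∑' k : ℕ, w (K + k + 1)) * ENNReal.ofReal κ := by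
    rw [← ENNReal.tsum_mul_right, ← htail]
    exact ENNReal.tsum_le_tsum hpiece
  have hsum2 : (∑' k : ℕ, w (K + k + 1)) = ⊤ := by
    by_contra h
    have h2 := ENNReal.mul_lt_top (lt_top_iff_ne_top.2 h) (ENNReal.ofReal_lt_top (r := κ))
    exact absurd (top_le_iff.1 hsum1) h2.ne
  have hsum3 : (∑' k : ℕ, w (K + k + 1)) ≤ ∑' k : ℕ, w (K + k) := by
    have hinj : Function.Injective (fun k : ℕ => k + 1) := fun a b h => by simpa using h
    have h2 := ENNReal.tsum_comp_le_tsum_of_injective hinj (fun k => w (K + k))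
    simpa [Nat.add_assoc] using h2
  have hfinal : (∑' k : ℕ, w (K + k)) = ⊤ := top_le_iff.1 (hsum2 ▸ hsum3)
  rw [← hfinal]
  apply tsum_congr
  intro k
  simp [hw, hzf]


/-- Theorem 1.1 (2), key step: let `F` be admissible on `[0,∞)` with `F(r) → ∞` as `r → ∞`
and suppose `∫_{F(1)}^∞ e^{-Az²} f_F(z) dz = ∞` for every `A > 0`, where `f_F` is the
inverse of `F`. If `φ : ℝⁿ → [0,∞)` is continuous, `F`-convex, and nonconstant, then
`∫ e^{-γ|x|²} φ(x) dx = ∞` for every `γ > 0`. -/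
theorem stmt_9 (n : ℕ) (F : ℝ → EReal)
    (hmono : StrictMonoOn F (Set.Ici 0))
    (hcont : ContinuousOn F (Set.Ioi 0))
    (h0 : Filter.Tendsto F (nhdsWithin 0 (Set.Ioi 0)) (nhds (F 0)))
    (hnotop : ∀ r : ℝ, 0 ≤ r → F r ≠ ⊤)
    (htop : Filter.Tendsto F Filter.atTop (nhds ⊤))
    (fF : ℝ → ℝ) (hinv : ∀ r : ℝ, 0 < r → fF ((F r).toReal) = r)
    (z₁ : ℝ) (hz₁ : F 1 = (z₁ : EReal))
    (hdiv : ∀ A : ℝ, 0 < A →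
      ∫⁻ z in Set.Ici z₁, ENNReal.ofReal (Real.exp (-A * z ^ 2) * fF z) = ⊤)
    (φ : EuclideanSpace ℝ (Fin n) → ℝ) (hφc : Continuous φ) (hφ0 : ∀ x, 0 ≤ φ x)
    (hFconv : ∀ x y : EuclideanSpace ℝ (Fin n), ∀ lam : ℝ, 0 < lam → lam < 1 →
      F (φ ((1 - lam) • x + lam • y)) ≤
        ((1 - lam : ℝ) : EReal) * F (φ x) + ((lam : ℝ) : EReal) * F (φ y))
    (hnc : ∃ x y, φ x ≠ φ y) :
    ∀ γ : ℝ, 0 < γ →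
      ∫⁻ x : EuclideanSpace ℝ (Fin n),
        ENNReal.ofReal (Real.exp (-γ * ‖x‖ ^ 2) * φ x) = ⊤ := by
  intro γ hγ
  -- basic fF facts
  have hf1 : ∀ z, z₁ ≤ z → 1 ≤ fF z := by
    intro z hz
    obtain ⟨r, hr1, _, hfr⟩ := aux_fF F hmono hcont hnotop htop fF hinv z₁ hz₁ z hz
    rw [hfr]; exact hr1
  have hfmono : ∀ z z', z₁ ≤ z → z ≤ z' → fF z ≤ fF z' := by
    intro z z' hz hzz
    obtain ⟨r, hr1, hFr, hfr⟩ := aux_fF F hmono hcont hnotop htop fF hinv z₁ hz₁ z hz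
    obtain ⟨r', hr1', hFr', hfr'⟩ := aux_fF F hmono hcont hnotop htop fF hinv z₁ hz₁ z'
      (le_trans hz hzz)
    rw [hfr, hfr']
    have : F r ≤ F r' := by rw [hFr, hFr']; exact_mod_cast hzz
    exact (hmono.le_iff_le (by norm_num; linarith) (by norm_num; linarith)).1 this
  -- get points a, b with φ a < φ b
  obtain ⟨x₀, y₀, hxy⟩ := hnc
  obtain ⟨a, b, hab⟩ : ∃ a b : EuclideanSpace ℝ (Fin n), φ a < φ b := by
    rcases lt_or_gt_of_ne hxy with h | h
    exacts [⟨x₀, y₀, h⟩, ⟨y₀, x₀, h⟩]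
  have hφb0 : 0 < φ b := lt_of_le_of_lt (hφ0 a) hab
  have hFbne : F (φ b) ≠ ⊥ := by
    intro hb
    have h1 : F 0 < F (φ b) := hmono (by norm_num) (by norm_num; exact (hφ0 b)) hφb0
    rw [hb] at h1
    exact (not_lt_bot h1)
  have hFbnetop : F (φ b) ≠ ⊤ := hnotop _ (hφ0 b)
  -- F (φ a) is a real number
  have hFane : F (φ a) ≠ ⊥ := by
    intro hbot
    set x₂ := a + (2:ℝ) • (b - a) with hx2
    have hmid : (1 - (1/2 : ℝ)) • a + (1/2 : ℝ) • x₂ = b := by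
      rw [hx2]
      match_scalars <;> norm_num
    have hconv := hFconv a x₂ (1/2) (by norm_num) (by norm_num)
    rw [hmid, hbot] at hconv
    have h2 : ((1 - 1/2 : ℝ) : EReal) * (⊥ : EReal) = ⊥ :=
      EReal.coe_mul_bot_of_pos (by norm_num)
    rw [h2] at hconv
    have hG : F (φ x₂) ≠ ⊤ := hnotop _ (hφ0 _)
    have h3 : (⊥ : EReal) + ((1/2 : ℝ) : EReal) * F (φ x₂) = ⊥ := by
      apply EReal.bot_add
    rw [h3] at hconv
    exact hFbne (le_bot_iff.1 hconv)
  obtain ⟨c, hc⟩ : ∃ c : ℝ, F (φ a) = (c : EReal) :=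
    ⟨(F (φ a)).toReal, (EReal.coe_toReal (hnotop _ (hφ0 a)) hFane).symm⟩
  -- the threshold m and κ
  obtain ⟨m, hm⟩ : ∃ _x : ℝ , _x = (φ a + φ b) / 2 := ⟨_, rfl⟩
  have hma : φ a < m := by rw [hm]; linarith
  have hmb : m < φ b := by rw [hm]; linarith
  have hm0 : 0 < m := by have := hφ0 a; rw [hm]; linarith
  have hFm : F (φ a) < F m := hmono (by norm_num; exact hφ0 a) (by norm_num; exact hm0.le) hma
  have hFmne : F m ≠ ⊥ := by
    intro h; rw [h] at hFm; exact not_lt_bot hFm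
  obtain ⟨d, hd⟩ : ∃ d : ℝ, F m = (d : EReal) :=
    ⟨(F m).toReal, (EReal.coe_toReal (hnotop _ hm0.le) hFmne).symm⟩
  have hdc : c < d := by
    rw [hc, hd] at hFm; exact_mod_cast hFm
  obtain ⟨κ, hκdef⟩ : ∃ _x : ℝ , _x = d - c := ⟨_, rfl⟩
  have hκ : 0 < κ := by rw [hκdef]; linarith
  -- ball around b where φ > m
  obtain ⟨ε, hε, hball⟩ : ∃ ε > 0, Metric.ball b ε ⊆ φ ⁻¹' Set.Ioi m := by
    have hopen : IsOpen (φ ⁻¹' Set.Ioi m) := isOpen_Ioi.preimage hφc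
    exact Metric.isOpen_iff.1 hopen b (by simp [Set.mem_preimage, hmb])
  have hFy : ∀ y, y ∈ Metric.ball b ε → ((c + κ : ℝ) : EReal) ≤ F (φ y) := by
    intro y hy
    have h1 : m ≤ φ y := (le_of_lt (hball hy))
    have h2 : F m ≤ F (φ y) := hmono.monotoneOn (by norm_num; exact hm0.le)
      (by norm_num; exact hφ0 y) h1
    rw [hd] at h2
    have : (c + κ : ℝ) = d := by rw [hκdef]; ring
    rw [this]
    exact h2
  -- geometry setup
  obtain ⟨θ, hθ⟩ : ∃ _x, _x = b - a := ⟨_, rfl⟩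
  have hθne : θ ≠ 0 := by
    rw [hθ, sub_ne_zero]
    intro h; rw [h] at hab; exact lt_irrefl _ hab
  obtain ⟨L, hL⟩ : ∃ _x : ℝ , _x = ‖θ‖ := ⟨_, rfl⟩
  have hL0 : 0 < L := by rw [hL]; exact norm_pos_iff.2 hθne
  obtain ⟨ρ, hρdef⟩ : ∃ _x : ℝ , _x = min ε (L/3) := ⟨_, rfl⟩
  have hρ : 0 < ρ := by rw [hρdef]; positivity
  have hρε : ρ ≤ ε := by rw [hρdef]; exact min_le_left _ _
  have hρL : ρ ≤ L/3 := by rw [hρdef]; exact min_le_right _ _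
  obtain ⟨C, hC⟩ : ∃ _x : ℝ , _x = ‖a‖ + ρ := ⟨_, rfl⟩
  have hC0 : 0 < C := by rw [hC]; positivity
  -- choose K
  obtain ⟨K, hK⟩ := exists_nat_ge (max 1 (max ((z₁ - c)/κ) (-2*c/κ)))
  have hK1 : 1 ≤ K := by
    have h1 : (1:ℝ) ≤ K := le_trans (le_max_left _ _) hK
    exact_mod_cast h1
  have hKz : z₁ ≤ c + κ * K := by
    have h1 : (z₁ - c)/κ ≤ K := le_trans (le_trans (le_max_left _ _) (le_max_right _ _)) hK
    rw [div_le_iff₀ hκ] at h1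
    linarith
  have hKc : 0 ≤ c + κ * K / 2 := by
    have h1 : -2*c/κ ≤ K := le_trans (le_trans (le_max_right _ _) (le_max_right _ _)) hK
    rw [div_le_iff₀ hκ] at h1
    linarith
  -- pointwise bound on balls
  have hpt : ∀ k : ℕ, K ≤ k → ∀ x ∈ Metric.ball (a + (k:ℝ) • θ) ρ,
      fF (c + κ * k) ≤ φ x := by
    intro k hk x hx
    have hk1 : (1:ℝ) ≤ (k:ℝ) := by
      have : 1 ≤ k := le_trans hK1 hk
      exact_mod_cast this
    have hk0 : (k:ℝ) ≠ 0 := by linarith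
    obtain ⟨y, hy⟩ : ∃ _x, _x = a + ((k:ℝ)⁻¹) • (x - a) := ⟨_, rfl⟩
    have hyb : y ∈ Metric.ball b ε := by
      rw [Metric.mem_ball] at hx ⊢
      have h1 : y - b = ((k:ℝ)⁻¹) • (x - (a + (k:ℝ) • θ)) := by
        rw [hy, hθ]
        match_scalars <;> (field_simp; try ring)
      have h2 : dist y b = ((k:ℝ))⁻¹ * dist x (a + (k:ℝ) • θ) := by
        rw [dist_eq_norm, dist_eq_norm, h1, norm_smul]
        simp [abs_of_pos (by positivity : (0:ℝ) < (k:ℝ)⁻¹)]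
      rw [h2]
      calc ((k:ℝ))⁻¹ * dist x (a + (k:ℝ) • θ) < ((k:ℝ))⁻¹ * ρ := by
            apply mul_lt_mul_of_pos_left hx (by positivity)
        _ ≤ 1 * ε := by
            apply mul_le_mul _ hρε hρ.le zero_le_one
            rw [inv_le_one_iff₀]; right; exact hk1
        _ = ε := one_mul ε
    have hxy : x = a + (k:ℝ) • (y - a) := by
      rw [hy]
      match_scalars <;> (field_simp; try ring)
    have hray := aux_ray F φ hφ0 hnotop hFconv a y c κ (k:ℝ) hc (hFy y hyb) hκ hk1
    rw [← hxy] at hray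
    -- convert to fF bound
    have hzk : z₁ ≤ c + κ * k := le_trans hKz (by nlinarith [hκ.le, (by exact_mod_cast hk : (K:ℝ) ≤ (k:ℝ))])
    obtain ⟨r, hr1, hFr, hfr⟩ := aux_fF F hmono hcont hnotop htop fF hinv z₁ hz₁ _ hzk
    rw [hfr]
    have hle : F r ≤ F (φ x) := by
      rw [hFr]
      refine le_trans ?_ hray
      apply EReal.coe_le_coe_iff.2
      linarith
    exact (hmono.le_iff_le (by norm_num; linarith) (by norm_num; exact hφ0 x)).1 hle
  -- the disjoint balls
  set s : ℕ → Set (EuclideanSpace ℝ (Fin n)) :=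
    fun k => Metric.ball (a + ((K + k : ℕ) : ℝ) • θ) ρ with hs
  have hdisj : Pairwise (Function.onFun Disjoint s) := by
    intro i j hij
    simp only [Function.onFun, hs]
    apply Metric.ball_disjoint_ball
    rw [dist_eq_norm]
    have h1 : a + ((K + i : ℕ) : ℝ) • θ - (a + ((K + j : ℕ) : ℝ) • θ)
        = (((K + i : ℕ) : ℝ) - ((K + j : ℕ) : ℝ)) • θ := by
      match_scalars <;> ring
    rw [h1, norm_smul]
    have h2 : (1:ℝ) ≤ |((K + i : ℕ) : ℝ) - ((K + j : ℕ) : ℝ)| := by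
      have hcast : ((K + i : ℕ) : ℝ) - ((K + j : ℕ) : ℝ) = (((i:ℤ) - (j:ℤ) : ℤ) : ℝ) := by
        push_cast; ring
      have hz : (1:ℤ) ≤ |(i:ℤ) - (j:ℤ)| := by
        rcases lt_or_gt_of_ne hij with h | h
        · rw [abs_sub_comm, abs_of_nonneg (by omega)]; omega
        · rw [abs_of_nonneg (by omega)]; omega
      rw [hcast, ← Int.cast_abs]
      exact_mod_cast hz
    calc ρ + ρ ≤ L/3 + L/3 := by linarith
      _ ≤ 1 * L := by linarith
      _ = 1 * ‖θ‖ := by rw [hL]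
      _ ≤ |((K + i : ℕ) : ℝ) - ((K + j : ℕ) : ℝ)| * ‖θ‖ := by
          apply mul_le_mul h2 le_rfl (norm_nonneg _) (abs_nonneg _)
  -- measurability of the integrand
  have hmeas : Measurable fun x : EuclideanSpace ℝ (Fin n) =>
      ENNReal.ofReal (Real.exp (-γ * ‖x‖ ^ 2) * φ x) := by
    apply Measurable.ennreal_ofReal
    exact ((continuous_const.mul (continuous_norm.pow 2)).rexp.mul hφc).measurable
  have hV : volume (Metric.ball (0 : EuclideanSpace ℝ (Fin n)) ρ) ≠ 0 :=
    (Metric.measure_ball_pos volume 0 hρ).ne'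
  -- lower bound on each ball
  have hlb : ∀ k : ℕ,
      ENNReal.ofReal (Real.exp (-γ * (C + ((K+k:ℕ):ℝ) * L) ^ 2) * fF (c + κ * ((K+k:ℕ):ℝ)))
        * volume (Metric.ball (0 : EuclideanSpace ℝ (Fin n)) ρ)
      ≤ ∫⁻ x in s k, ENNReal.ofReal (Real.exp (-γ * ‖x‖ ^ 2) * φ x) := by
    intro k
    have hKk : K ≤ K + k := Nat.le_add_right _ _
    have hballvol : volume (s k)
        = volume (Metric.ball (0 : EuclideanSpace ℝ (Fin n)) ρ) := by
      rw [hs]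
      exact Measure.addHaar_ball_center volume _ ρ
    rw [← hballvol, ← setLIntegral_const]
    apply setLIntegral_mono hmeas
    intro x hx
    apply ENNReal.ofReal_le_ofReal
    have hxball : x ∈ Metric.ball (a + (((K+k:ℕ)):ℝ) • θ) ρ := hx
    have hφx : fF (c + κ * ((K+k:ℕ):ℝ)) ≤ φ x := hpt (K+k) hKk x hxball
    have hfF1 : 1 ≤ fF (c + κ * ((K+k:ℕ):ℝ)) := by
      apply hf1
      have hcast : (K:ℝ) ≤ ((K+k:ℕ):ℝ) := by exact_mod_cast hKk
      nlinarith
    have hnx : ‖x‖ ≤ C + ((K+k:ℕ):ℝ) * L := by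
      have h1 : ‖x - (a + (((K+k:ℕ)):ℝ) • θ)‖ < ρ := by
        rw [← dist_eq_norm]; exact hxball
      have h2 : ‖x‖ ≤ ‖x - (a + (((K+k:ℕ)):ℝ) • θ)‖ + ‖a + (((K+k:ℕ)):ℝ) • θ‖ := by
        have := norm_add_le (x - (a + (((K+k:ℕ)):ℝ) • θ)) (a + (((K+k:ℕ)):ℝ) • θ)
        simpa using this
      have h3 : ‖a + (((K+k:ℕ)):ℝ) • θ‖ ≤ ‖a‖ + ((K+k:ℕ):ℝ) * L := by
        refine le_trans (norm_add_le _ _) ?_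
        rw [norm_smul, Real.norm_eq_abs, abs_of_nonneg (by positivity), hL]
      rw [hC]
      linarith
    have hexp : Real.exp (-γ * (C + ((K+k:ℕ):ℝ) * L) ^ 2) ≤ Real.exp (-γ * ‖x‖ ^ 2) := by
      apply Real.exp_le_exp.2
      have h4 : ‖x‖ ^ 2 ≤ (C + ((K+k:ℕ):ℝ) * L) ^ 2 :=
        pow_le_pow_left₀ (norm_nonneg x) hnx 2
      nlinarith
    have hexp0 : 0 < Real.exp (-γ * (C + ((K+k:ℕ):ℝ) * L) ^ 2) := Real.exp_pos _
    nlinarith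
  -- put everything together
  have hsum := aux_sum fF z₁ hf1 hfmono hdiv γ C L c κ hγ hC0 hL0 hκ K hK1 hKz hKc
  have hchain : (⊤ : ℝ≥0∞) ≤ ∫⁻ x : EuclideanSpace ℝ (Fin n),
      ENNReal.ofReal (Real.exp (-γ * ‖x‖ ^ 2) * φ x) := by
    calc (⊤ : ℝ≥0∞)
        = (∑' k : ℕ, ENNReal.ofReal
            (Real.exp (-γ * (C + ((K+k:ℕ):ℝ) * L) ^ 2) * fF (c + κ * ((K+k:ℕ):ℝ))))
          * volume (Metric.ball (0 : EuclideanSpace ℝ (Fin n)) ρ) := by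
          rw [hsum]; exact (ENNReal.top_mul hV).symm
      _ = ∑' k : ℕ, ENNReal.ofReal
            (Real.exp (-γ * (C + ((K+k:ℕ):ℝ) * L) ^ 2) * fF (c + κ * ((K+k:ℕ):ℝ)))
          * volume (Metric.ball (0 : EuclideanSpace ℝ (Fin n)) ρ) :=
          ENNReal.tsum_mul_right.symm
      _ ≤ ∑' k : ℕ, ∫⁻ x in s k, ENNReal.ofReal (Real.exp (-γ * ‖x‖ ^ 2) * φ x) :=
          ENNReal.tsum_le_tsum hlb
      _ = ∫⁻ x in ⋃ k : ℕ, s k, ENNReal.ofReal (Real.exp (-γ * ‖x‖ ^ 2) * φ x) := by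
          rw [lintegral_iUnion (fun k => by rw [hs]; exact Metric.isOpen_ball.measurableSet) hdisj]
      _ ≤ ∫⁻ x : EuclideanSpace ℝ (Fin n), ENNReal.ofReal (Real.exp (-γ * ‖x‖ ^ 2) * φ x) :=
          setLIntegral_le_lintegral _ _
  exact top_le_iff.1 hchain
end

section
/- Let g : J → ℝ be convex and non-increasing on an interval J = (c, ∞) (c ≥ -∞), and suppose a C² function f on J satisfies f' > 0 and (log f')' = g, with lim_{z→∞} f(z) = ∞. If there exists z₃ ∈ J with g(z₃) < 0, then f is bounded above on [z₃,∞), a contradiction; hence g ≥ 0 on J, i.e., f is convex on J. -/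
/-- Step (3.24) in the proof of Theorem 1.2: let `g` be convex and non-increasing on an
interval `J = (c,∞)` (with `c ≥ -∞`), and let `f` be `C²` on `J` with `f' > 0`,
`(log f')' = g`, and `f(z) → ∞` as `z → ∞`. Then `g ≥ 0` on `J`, i.e. `f` is convex
on `J`. -/
theorem stmt_11 (c : EReal) (J : Set ℝ) (hJ : J = {z : ℝ | c < (z : EReal)})
    (g f : ℝ → ℝ)
    (hgconv : ConvexOn ℝ J g) (hganti : AntitoneOn g J)
    (hf : ContDiffOn ℝ 2 f J) (hf' : ∀ z ∈ J, 0 < deriv f z)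
    (hlog : ∀ z ∈ J, deriv (fun w => Real.log (deriv f w)) z = g z)
    (htop : Filter.Tendsto f Filter.atTop Filter.atTop) :
    (∀ z ∈ J, 0 ≤ g z) ∧ ConvexOn ℝ J f := by
  have hJopen : IsOpen J := by
    rw [hJ]
    exact isOpen_Ioi.preimage continuous_coe_real_ereal
  have hup : ∀ z ∈ J, ∀ w, z ≤ w → w ∈ J := by
    intro z hz w hw
    rw [hJ] at hz ⊢
    exact lt_of_lt_of_le (show c < (z : EReal) from hz) (EReal.coe_le_coe_iff.2 hw)
  have hJconv : Convex ℝ J := by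
    rw [convex_iff_ordConnected]
    exact ⟨fun x hx y hy z hz => hup x hx z hz.1⟩
  have hfd : ∀ z ∈ J, DifferentiableAt ℝ f z := fun z hz =>
    ((hf.differentiableOn two_ne_zero) z hz).differentiableAt (hJopen.mem_nhds hz)
  have hf1 : ContDiffOn ℝ 1 (deriv f) J := by
    have := (contDiffOn_succ_iff_deriv_of_isOpen (n := 1) hJopen).1 (by exact_mod_cast hf)
    exact this.2.2
  have hfdd : ∀ z ∈ J, DifferentiableAt ℝ (deriv f) z := fun z hz =>
    ((hf1.differentiableOn one_ne_zero) z hz).differentiableAt (hJopen.mem_nhds hz)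
  have hld : ∀ z ∈ J, DifferentiableAt ℝ (fun w => Real.log (deriv f w)) z := fun z hz =>
    (hfdd z hz).log (hf' z hz).ne'
  have hld' : ∀ z ∈ J, HasDerivAt (fun w => Real.log (deriv f w)) (g z) z := fun z hz =>
    hlog z hz ▸ (hld z hz).hasDerivAt
  -- main step: g ≥ 0 on J
  have hg0 : ∀ z ∈ J, 0 ≤ g z := by
    intro z₃ hz₃
    by_contra hneg
    push_neg at hneg
    obtain ⟨ε, hεpos, hεg⟩ : ∃ ε, 0 < ε ∧ g z₃ = -ε := ⟨-g z₃, by linarith, by ring⟩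
    obtain ⟨A, hApos, hAdef⟩ : ∃ A, 0 < A ∧ deriv f z₃ = A := ⟨deriv f z₃, hf' z₃ hz₃, rfl⟩
    have hsub : Set.Ici z₃ ⊆ J := fun w hw => hup z₃ hz₃ w hw
    have hLder : ∀ w ∈ J, HasDerivAt (fun w => Real.log (deriv f w) + ε * w) (g w + ε) w := by
      intro w hw
      simpa using (hld' w hw).fun_add ((hasDerivAt_id w).const_mul ε)
    have hL : AntitoneOn (fun w => Real.log (deriv f w) + ε * w) (Set.Ici z₃) := by
      apply antitoneOn_of_deriv_nonpos (convex_Ici z₃)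
      · exact fun w hw => (hLder w (hsub hw)).continuousAt.continuousWithinAt
      · intro w hw
        rw [interior_Ici] at hw
        exact (hLder w (hsub (Set.Ioi_subset_Ici_self hw))).differentiableAt.differentiableWithinAt
      · intro w hw
        rw [interior_Ici] at hw
        have hwJ : w ∈ J := hsub (Set.Ioi_subset_Ici_self hw)
        rw [(hLder w hwJ).deriv]
        have : g w ≤ g z₃ := hganti hz₃ hwJ hw.le
        linarith
    have hf'le : ∀ w ∈ Set.Ici z₃, deriv f w ≤ A * Real.exp (-ε * (w - z₃)) := by
      intro w hw
      have h1 : Real.log (deriv f w) + ε * w ≤ Real.log (deriv f z₃) + ε * z₃ :=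
        hL Set.self_mem_Ici hw hw
      have h2 : Real.log (deriv f w) ≤ Real.log A + (-ε * (w - z₃)) := by
        rw [hAdef] at h1; nlinarith [h1]
      calc deriv f w = Real.exp (Real.log (deriv f w)) :=
            (Real.exp_log (hf' w (hsub hw))).symm
        _ ≤ Real.exp (Real.log A + (-ε * (w - z₃))) := Real.exp_le_exp.2 h2
        _ = A * Real.exp (-ε * (w - z₃)) := by rw [Real.exp_add, Real.exp_log hApos]
    have hexp : ∀ w : ℝ, HasDerivAt (fun w => (A / ε) * Real.exp (-ε * (w - z₃)))
        (-(A * Real.exp (-ε * (w - z₃)))) w := by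
      intro w
      have h1 : HasDerivAt (fun w : ℝ => -ε * (w - z₃)) (-ε) w := by
        simpa using ((hasDerivAt_id w).sub_const z₃).const_mul (-ε)
      have h3 := ((Real.hasDerivAt_exp (-ε * (w - z₃))).comp w h1).const_mul (A / ε)
      refine h3.congr_deriv ?_
      field_simp
    have hh : AntitoneOn (fun w => f w + (A / ε) * Real.exp (-ε * (w - z₃))) (Set.Ici z₃) := by
      apply antitoneOn_of_deriv_nonpos (convex_Ici z₃)
      · exact fun w hw => ((hfd w (hsub hw)).hasDerivAt.add
          (hexp w)).continuousAt.continuousWithinAt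
      · intro w hw
        rw [interior_Ici] at hw
        exact ((hfd w (hsub (Set.Ioi_subset_Ici_self hw))).hasDerivAt.add (hexp w)).differentiableAt.differentiableWithinAt
      · intro w hw
        rw [interior_Ici] at hw
        rw [((hfd w (hsub (Set.Ioi_subset_Ici_self hw))).hasDerivAt.fun_add (hexp w)).deriv]
        have := hf'le w (Set.Ioi_subset_Ici_self hw)
        linarith
    have hbnd : ∀ w ∈ Set.Ici z₃, f w ≤ f z₃ + A / ε := by
      intro w hw
      have h1 := hh Set.self_mem_Ici hw hw
      have hKe : 0 < (A / ε) * Real.exp (-ε * (w - z₃)) :=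
        mul_pos (div_pos hApos hεpos) (Real.exp_pos _)
      simp only [sub_self, mul_zero, neg_zero, Real.exp_zero, mul_one] at h1
      linarith
    obtain ⟨w, hw1, hw2⟩ := ((htop.eventually_gt_atTop (f z₃ + A / ε)).and
      (Filter.eventually_ge_atTop z₃)).exists
    exact absurd (hbnd w hw2) (not_le.2 hw1)
  refine ⟨hg0, ?_⟩
  have hlmono : MonotoneOn (fun w => Real.log (deriv f w)) J := by
    apply monotoneOn_of_deriv_nonneg hJconv
    · exact fun w hw => (hld w hw).continuousAt.continuousWithinAt
    · intro w hw
      rw [hJopen.interior_eq] at hw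
      exact (hld w hw).differentiableWithinAt
    · intro w hw
      rw [hJopen.interior_eq] at hw
      rw [hlog w hw]
      exact hg0 w hw
  have hmono : MonotoneOn (deriv f) J := by
    intro x hx y hy hxy
    have := hlmono hx hy hxy
    calc deriv f x = Real.exp (Real.log (deriv f x)) := (Real.exp_log (hf' x hx)).symm
      _ ≤ Real.exp (Real.log (deriv f y)) := Real.exp_le_exp.2 this
      _ = deriv f y := Real.exp_log (hf' y hy)
  exact (hmono.mono interior_subset).convexOn_of_deriv hJconv
    (fun w hw => (hfd w hw).continuousAt.continuousWithinAt)
    (fun w hw => (hfd w (interior_subset hw)).differentiableWithinAt)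
end

section
/- Let f : J → (0,∞) be C² on an interval J = (c,∞) with f' > 0, lim_{z→∞} f(z) = ∞, and suppose g := (log f')' = f''/f' is convex on J. If for every A > 0 one has ∫_{z₀}^∞ e^{-Az²} f(z) dz < ∞ (some z₀ ∈ J), then g is non-increasing on J. -/
open MeasureTheory

/-- Step (3.22) in the proof of Theorem 1.2: let `f : J → (0,∞)` be `C²` on `J = (c,∞)`
with `f' > 0`, `f(z) → ∞` as `z → ∞`, and suppose `g := (log f')' = f''/f'` is convex
on `J`. If `∫_{z₀}^∞ e^{-Az²} f(z) dz < ∞` for every `A > 0` (some `z₀ ∈ J`), then `g` is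
non-increasing on `J`. -/
theorem stmt_12 (c : EReal) (J : Set ℝ) (hJ : J = {z : ℝ | c < (z : EReal)})
    (f g : ℝ → ℝ)
    (hfpos : ∀ z ∈ J, 0 < f z)
    (hf : ContDiffOn ℝ 2 f J) (hf' : ∀ z ∈ J, 0 < deriv f z)
    (htop : Filter.Tendsto f Filter.atTop Filter.atTop)
    (hg : ∀ z ∈ J, g z = deriv (fun w => Real.log (deriv f w)) z)
    (hgconv : ConvexOn ℝ J g)
    (z₀ : ℝ) (hz₀ : z₀ ∈ J)
    (hint : ∀ A : ℝ, 0 < A →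
      IntegrableOn (fun z => Real.exp (-A * z ^ 2) * f z) (Set.Ici z₀)) :
    AntitoneOn g J := by
  -- J is open and upward closed
  have hJopen : IsOpen J := by
    rw [hJ]
    exact isOpen_Ioi.preimage continuous_coe_real_ereal
  have hIci : ∀ {w : ℝ}, w ∈ J → Set.Ici w ⊆ J := by
    intro w hw z hz
    rw [hJ] at hw ⊢
    exact lt_of_lt_of_le hw (EReal.coe_le_coe_iff.mpr hz)
  -- derivative facts
  have hd1 : ∀ z ∈ J, HasDerivAt f (deriv f z) z := fun z hz =>
    ((hf.differentiableOn (by norm_num)).differentiableAt (hJopen.mem_nhds hz)).hasDerivAt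
  have hd2' : ContDiffOn ℝ 1 (deriv f) J := hf.deriv_of_isOpen hJopen (by norm_num)
  have hd2 : ∀ z ∈ J, HasDerivAt (deriv f) (deriv (deriv f) z) z := fun z hz =>
    ((hd2'.differentiableOn (by norm_num)).differentiableAt (hJopen.mem_nhds hz)).hasDerivAt
  have hLg : ∀ z ∈ J, HasDerivAt (fun w => Real.log (deriv f w)) (g z) z := by
    intro z hz
    have h := (hd2 z hz).log (ne_of_gt (hf' z hz))
    have : g z = deriv (deriv f) z / deriv f z := by rw [hg z hz, h.deriv]
    rwa [this]
  -- begin proof of antitonicity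
  intro a ha b hb hab
  by_contra hcon
  push_neg at hcon
  have haltb : a < b := by
    rcases lt_or_eq_of_le hab with h | h
    · exact h
    · exact absurd (h ▸ hcon) (lt_irrefl _)
  set s : ℝ := (g b - g a) / (b - a) with hs_def
  have hspos : 0 < s := div_pos (by linarith) (by linarith)
  set β : ℝ := g b - s * b with hβ_def
  -- linear lower bound on g
  have hlin : ∀ z ∈ Set.Ici b, s * z + β ≤ g z := by
    intro z hz
    rcases eq_or_lt_of_le (Set.mem_Ici.mp hz) with h | h
    · rw [← h]; ring_nf; linarith [le_refl (g b)]
    · have hzJ : z ∈ J := hIci hb hz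
      have := hgconv.slope_mono_adjacent ha hzJ haltb h
      rw [← hs_def] at this
      have hzb : 0 < z - b := by linarith
      have : s * (z - b) ≤ g z - g b := by
        calc s * (z - b) ≤ (g z - g b) / (z - b) * (z - b) := by
              apply mul_le_mul_of_nonneg_right this (le_of_lt hzb)
          _ = g z - g b := by field_simp
      simp only [hβ_def]; linarith
  -- lower bound log (f') via monotonicity of h := log f' - (s/2 z² + β z)
  set L : ℝ → ℝ := fun w => Real.log (deriv f w) with hL_def
  set h : ℝ → ℝ := fun z => L z - (s / 2 * z ^ 2 + β * z) with hh_def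
  have hhd : ∀ z ∈ J, HasDerivAt h (g z - (s * z + β)) z := by
    intro z hz
    have h2 : HasDerivAt (fun z : ℝ => s / 2 * z ^ 2 + β * z)
        (s / 2 * (2 * z ^ 1) + β * 1) z :=
      (((hasDerivAt_pow 2 z)).const_mul (s / 2)).add ((hasDerivAt_id z).const_mul β)
    have := (hLg z hz).sub h2
    exact this.congr_deriv (by ring)
  have hbJ : b ∈ J := hb
  have hmono_h : MonotoneOn h (Set.Ici b) := by
    apply monotoneOn_of_deriv_nonneg (convex_Ici b)
    · exact fun z hz => ((hhd z (hIci hb hz)).continuousAt).continuousWithinAt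
    · rw [interior_Ici]
      exact fun z hz => ((hhd z (hIci hb (Set.mem_Ici.mpr (le_of_lt hz)))).differentiableAt).differentiableWithinAt
    · rw [interior_Ici]
      intro z hz
      rw [(hhd z (hIci hb (Set.mem_Ici.mpr (le_of_lt hz)))).deriv]
      have := hlin z (Set.mem_Ici.mpr (le_of_lt hz))
      linarith
  set C₁ : ℝ := h b with hC₁_def
  have hf'lb : ∀ z ∈ Set.Ici b, Real.exp (s / 2 * z ^ 2 + β * z + C₁) ≤ deriv f z := by
    intro z hz
    have h1 : C₁ ≤ h z := hmono_h (Set.self_mem_Ici) hz (Set.mem_Ici.mp hz)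
    have h2 : s / 2 * z ^ 2 + β * z + C₁ ≤ L z := by simp only [hh_def] at h1; linarith
    calc Real.exp (s / 2 * z ^ 2 + β * z + C₁) ≤ Real.exp (L z) := Real.exp_le_exp.mpr h2
      _ = deriv f z := Real.exp_log (hf' z (hIci hb hz))
  -- find M beyond which f' dominates the derivative of exp (s/8 z²)
  have hquad : Filter.Tendsto (fun z : ℝ => 3 * s / 8 * z ^ 2 + (β - s / 4) * z + C₁)
      Filter.atTop Filter.atTop := by
    have h1 : Filter.Tendsto (fun z : ℝ => z * (3 * s / 8 * z + (β - s / 4)) + C₁)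
        Filter.atTop Filter.atTop := by
      apply Filter.tendsto_atTop_add_const_right
      apply Filter.Tendsto.atTop_mul_atTop₀ Filter.tendsto_id
      apply Filter.tendsto_atTop_add_const_right
      exact (Filter.tendsto_id.const_mul_atTop (by linarith : (0:ℝ) < 3 * s / 8))
    convert h1 using 2 with z
    ring
  obtain ⟨M₁, hM₁⟩ := Filter.eventually_atTop.mp (hquad.eventually_ge_atTop 0)
  set M : ℝ := max M₁ b with hM_def
  have hMb : b ≤ M := le_max_right _ _
  have hMJ : M ∈ J := hIci hb (Set.mem_Ici.mpr (le_max_right _ _))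
  have hf'lb2 : ∀ z ∈ Set.Ici M, s / 4 * z * Real.exp (s / 8 * z ^ 2) ≤ deriv f z := by
    intro z hz
    have hz' : z ∈ Set.Ici b := le_trans hMb hz
    have h0 : 0 ≤ 3 * s / 8 * z ^ 2 + (β - s / 4) * z + C₁ :=
      hM₁ z (le_trans (le_max_left _ _) hz)
    have h1 : s / 4 * z ≤ Real.exp (3 * s / 8 * z ^ 2 + β * z + C₁) := by
      have h2 := Real.add_one_le_exp (3 * s / 8 * z ^ 2 + β * z + C₁)
      nlinarith
    calc s / 4 * z * Real.exp (s / 8 * z ^ 2)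
        ≤ Real.exp (3 * s / 8 * z ^ 2 + β * z + C₁) * Real.exp (s / 8 * z ^ 2) :=
          mul_le_mul_of_nonneg_right h1 (le_of_lt (Real.exp_pos _))
      _ = Real.exp (s / 2 * z ^ 2 + β * z + C₁) := by
          rw [← Real.exp_add]; congr 1; ring
      _ ≤ deriv f z := hf'lb z hz'
  -- lower bound f via monotonicity of k := f - exp (s/8 z²)
  set k : ℝ → ℝ := fun z => f z - Real.exp (s / 8 * z ^ 2) with hk_def
  have hkd : ∀ z ∈ J, HasDerivAt k (deriv f z - s / 4 * z * Real.exp (s / 8 * z ^ 2)) z := by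
    intro z hz
    have h2 : HasDerivAt (fun z : ℝ => Real.exp (s / 8 * z ^ 2))
        (Real.exp (s / 8 * z ^ 2) * (s / 8 * (2 * z ^ 1))) z :=
      (((hasDerivAt_pow 2 z)).const_mul (s / 8)).exp
    have := (hd1 z hz).sub h2
    exact this.congr_deriv (by ring)
  have hmono_k : MonotoneOn k (Set.Ici M) := by
    apply monotoneOn_of_deriv_nonneg (convex_Ici M)
    · exact fun z hz => ((hkd z (hIci hMJ hz)).continuousAt).continuousWithinAt
    · rw [interior_Ici]
      exact fun z hz => ((hkd z (hIci hMJ (Set.mem_Ici.mpr (le_of_lt hz)))).differentiableAt).differentiableWithinAt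
    · rw [interior_Ici]
      intro z hz
      rw [(hkd z (hIci hMJ (Set.mem_Ici.mpr (le_of_lt hz)))).deriv]
      have := hf'lb2 z (Set.mem_Ici.mpr (le_of_lt hz))
      linarith
  set C₂ : ℝ := k M with hC₂_def
  have hflb : ∀ z ∈ Set.Ici M, Real.exp (s / 8 * z ^ 2) + C₂ ≤ f z := by
    intro z hz
    have := hmono_k (Set.self_mem_Ici) hz (Set.mem_Ici.mp hz)
    simp only [hk_def] at this ⊢
    linarith
  -- contradiction with Gaussian integrability, A := s/16
  have hA : (0:ℝ) < s / 16 := by linarith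
  have hexp : Filter.Tendsto (fun z : ℝ => Real.exp (s / 16 * z ^ 2)) Filter.atTop Filter.atTop := by
    apply Real.tendsto_exp_atTop.comp
    have : Filter.Tendsto (fun z : ℝ => z * (s / 16 * z)) Filter.atTop Filter.atTop :=
      Filter.Tendsto.atTop_mul_atTop₀ Filter.tendsto_id
        (Filter.tendsto_id.const_mul_atTop (by linarith : (0:ℝ) < s / 16))
    convert this using 2 with z
    ring
  obtain ⟨N₁, hN₁⟩ := Filter.eventually_atTop.mp (hexp.eventually_ge_atTop (1 + |C₂|))
  set N : ℝ := max (max N₁ M) z₀ with hN_def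
  have hlb1 : ∀ z ∈ Set.Ici N, (1:ℝ) ≤ Real.exp (-(s/16) * z ^ 2) * f z := by
    intro z hz
    have hzM : z ∈ Set.Ici M := Set.mem_Ici.mpr <| le_trans (le_trans (le_max_right _ _) (le_max_left _ _)) hz
    have hzN₁ : N₁ ≤ z := le_trans (le_trans (le_max_left _ _) (le_max_left _ _)) hz
    have h1 : Real.exp (s / 8 * z ^ 2) + C₂ ≤ f z := hflb z hzM
    have h2 : 1 + |C₂| ≤ Real.exp (s / 16 * z ^ 2) := hN₁ z hzN₁
    have hepos : (0:ℝ) < Real.exp (-(s/16) * z ^ 2) := Real.exp_pos _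
    have h3 : Real.exp (-(s/16) * z ^ 2) * (Real.exp (s / 8 * z ^ 2) + C₂)
        ≤ Real.exp (-(s/16) * z ^ 2) * f z := by
      apply mul_le_mul_of_nonneg_left h1 (le_of_lt hepos)
    have h4 : Real.exp (-(s/16) * z ^ 2) * Real.exp (s / 8 * z ^ 2)
        = Real.exp (s / 16 * z ^ 2) := by
      rw [← Real.exp_add]; ring_nf
    have h5 : Real.exp (-(s/16) * z ^ 2) ≤ 1 := by
      rw [← Real.exp_zero]
      apply Real.exp_le_exp.mpr
      nlinarith [sq_nonneg z]
    have h6 : Real.exp (-(s/16) * z ^ 2) * C₂ ≥ -|C₂| := by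
      rcases le_or_gt 0 C₂ with hC | hC
      · have : 0 ≤ Real.exp (-(s/16) * z ^ 2) * C₂ := mul_nonneg (le_of_lt hepos) hC
        have : (0:ℝ) ≤ |C₂| := abs_nonneg _
        linarith
      · have h7 : Real.exp (-(s/16) * z ^ 2) * C₂ ≥ 1 * C₂ := by
          apply mul_le_mul_of_nonpos_right h5 (le_of_lt hC)
        rw [abs_of_neg hC]; linarith
    nlinarith
  -- transfer to integrability contradiction
  have hintN : IntegrableOn (fun z => Real.exp (-(s/16) * z ^ 2) * f z) (Set.Ici N) := by
    apply (hint (s/16) hA).mono_set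
    exact Set.Ici_subset_Ici.mpr (le_max_right _ _)
  have hone : IntegrableOn (fun _ : ℝ => (1:ℝ)) (Set.Ici N) := by
    apply Integrable.mono' hintN aestronglyMeasurable_const
    rw [ae_restrict_iff' measurableSet_Ici]
    exact ae_of_all _ fun z hz => by
      rw [norm_one]; exact hlb1 z hz
  have : (volume (Set.Ici N)) < ⊤ := by
    rcases ((integrableOn_const_iff (C := (1:ℝ))).mp hone) with h | h
    · norm_num at h
    · exact h
  rw [Real.volume_Ici] at this
  exact absurd this (by simp)
end

section
/- Let f : (c,∞) → (0,∞) be C² with f' > 0, lim_{z→c⁺} f(z) = 0, and suppose g := f''/f' is positive and non-increasing on (c, z*] for some z* with f''(z*) > 0. Then f(z*) f''(z*) ≤ (f'(z*))², i.e., f is log-concave at z*. -/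
/-- Step (3.25) in the proof of Theorem 1.2: let `f : (c,∞) → (0,∞)` be `C²` with
`f' > 0` and `f(z) → 0` as `z → c⁺`, and suppose `g := f''/f'` is positive and
non-increasing on `(c, z*]` where `f''(z*) > 0`. Then `f(z*) f''(z*) ≤ (f'(z*))²`,
i.e. `f` is log-concave at `z*`. -/
theorem stmt_13 (c : EReal) (J : Set ℝ) (hJ : J = {z : ℝ | c < (z : EReal)})
    (f g : ℝ → ℝ)
    (hfpos : ∀ z ∈ J, 0 < f z)
    (hf : ContDiffOn ℝ 2 f J) (hf' : ∀ z ∈ J, 0 < deriv f z)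
    (hlim : Filter.Tendsto f (Filter.comap Real.toEReal (nhdsWithin c (Set.Ioi c)))
      (nhds 0))
    (hg : ∀ z ∈ J, g z = deriv (deriv f) z / deriv f z)
    (zs : ℝ) (hzs : zs ∈ J) (hf'' : 0 < deriv (deriv f) zs)
    (hgpos : ∀ z ∈ J ∩ Set.Iic zs, 0 < g z)
    (hganti : AntitoneOn g (J ∩ Set.Iic zs)) :
    f zs * deriv (deriv f) zs ≤ (deriv f zs) ^ 2 := by
  have hJopen : IsOpen J := by
    rw [hJ]
    exact isOpen_Ioi.preimage continuous_coe_real_ereal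
  have hczs : c < (zs : EReal) := by rw [hJ] at hzs; exact hzs
  -- J is an upper-ish convex set
  have hJup : ∀ ⦃x y : ℝ⦄, x ∈ J → x ≤ y → y ∈ J := by
    intro x y hx hxy
    rw [hJ] at hx ⊢
    exact lt_of_lt_of_le hx (EReal.coe_le_coe_iff.mpr hxy)
  have hJconv : Convex ℝ J := by
    rw [convex_iff_ordConnected]
    exact ⟨fun x hx y _ z hz => hJup hx hz.1⟩
  set D := J ∩ Set.Iic zs with hD
  have hDconv : Convex ℝ D := hJconv.inter (convex_Iic zs)
  -- differentiability facts
  have hfd : DifferentiableOn ℝ f J := hf.differentiableOn (by norm_num)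
  have hder : ContDiffOn ℝ 1 (deriv f) J := hf.deriv_of_isOpen hJopen (by norm_num)
  have hderD : DifferentiableOn ℝ (deriv f) J := hder.differentiableOn (by norm_num)
  have hderiv1 : ∀ z ∈ J, HasDerivAt f (deriv f z) z := fun z hz =>
    ((hfd z hz).differentiableAt (hJopen.mem_nhds hz)).hasDerivAt
  have hderiv2 : ∀ z ∈ J, HasDerivAt (deriv f) (deriv (deriv f) z) z := fun z hz =>
    ((hderD z hz).differentiableAt (hJopen.mem_nhds hz)).hasDerivAt
  set gs : ℝ := deriv (deriv f) zs / deriv f zs with hgs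
  have hgszs : g zs = gs := hg zs hzs
  have hgspos : 0 < gs := by
    rw [← hgszs]; exact hgpos zs ⟨hzs, le_refl zs⟩
  set φ : ℝ → ℝ := fun z => deriv f z - gs * f z with hφ
  have hφderiv : ∀ z ∈ J, HasDerivAt φ (deriv (deriv f) z - gs * deriv f z) z := by
    intro z hz
    exact (hderiv2 z hz).sub ((hderiv1 z hz).const_mul gs)
  -- monotone
  have hmono : MonotoneOn φ D := by
    apply monotoneOn_of_deriv_nonneg hDconv
    · apply ContinuousOn.sub
      · exact (hder.continuousOn).mono (Set.inter_subset_left)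
      · exact (continuousOn_const.mul (hfd.continuousOn)).mono Set.inter_subset_left
    · intro x hx
      have hx' : x ∈ D := interior_subset hx
      exact (hφderiv x hx'.1).differentiableAt.differentiableWithinAt
    · intro x hx
      have hx' : x ∈ D := interior_subset hx
      have hxJ : x ∈ J := hx'.1
      rw [(hφderiv x hxJ).deriv]
      have hgx : g x = deriv (deriv f) x / deriv f x := hg x hxJ
      have hd1 : 0 < deriv f x := hf' x hxJ
      have hd2 : deriv (deriv f) x = g x * deriv f x := by
        rw [hgx]; field_simp
      have hgge : gs ≤ g x := by
        rw [← hgszs]; exact hganti hx' ⟨hzs, le_refl zs⟩ hx'.2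
      rw [hd2]
      nlinarith
  -- φ zs ≥ 0 via the limit
  have hφzs : 0 ≤ φ zs := by
    by_contra hneg
    push_neg at hneg
    set ε : ℝ := -φ zs / gs with hε
    have hεpos : 0 < ε := div_pos (by linarith) hgspos
    set L := Filter.comap Real.toEReal (nhdsWithin c (Set.Ioi c)) with hL
    have hIoo : Set.Ioo c (zs : EReal) ∈ nhdsWithin c (Set.Ioi c) :=
      Ioo_mem_nhdsGT_of_mem ⟨le_refl c, hczs⟩
    have hA : Real.toEReal ⁻¹' (Set.Ioo c (zs : EReal)) ∈ L :=
      Filter.preimage_mem_comap hIoo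
    have hB : ∀ᶠ z in L, f z < ε := hlim.eventually_lt_const hεpos
    have hnb : (nhdsWithin c (Set.Ioi c)).NeBot :=
      nhdsGT_neBot_of_exists_gt ⟨(zs : EReal), hczs⟩
    have hLnb : L.NeBot := by
      refine Filter.comap_neBot fun t ht => ?_
      have hmem : t ∩ Set.Ioo c (zs : EReal) ∈ nhdsWithin c (Set.Ioi c) :=
        Filter.inter_mem ht hIoo
      obtain ⟨x, hxt, hx1, hx2⟩ := hnb.nonempty_of_mem hmem
      induction x with
      | bot => exact absurd hx1 (not_lt_bot)
      | coe r => exact ⟨r, hxt⟩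
      | top => exact absurd hx2 (not_top_lt)
    obtain ⟨z, hz1, hz2⟩ := (hB.and hA).exists
    have hzJ : z ∈ J := by rw [hJ]; exact hz2.1
    have hzle : z ≤ zs := le_of_lt (EReal.coe_lt_coe_iff.mp hz2.2)
    have h1 : φ z ≤ φ zs := hmono ⟨hzJ, hzle⟩ ⟨hzs, le_refl zs⟩ hzle
    have h2 : 0 < deriv f z := hf' z hzJ
    have h3 : -gs * f z < φ z := by simp only [hφ]; linarith
    have h4 : f z < ε := hz1
    have : -gs * f z > -gs * ε := by
      have := mul_lt_mul_of_pos_left h4 hgspos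
      linarith
    have hεeq : gs * ε = -φ zs := by
      rw [hε]; field_simp
    linarith
  -- conclude
  have hd1zs : 0 < deriv f zs := hf' zs hzs
  have : gs * f zs ≤ deriv f zs := by
    have := hφzs
    simp only [hφ] at this
    linarith
  rw [hgs] at this
  have hfzs : 0 < f zs := hfpos zs hzs
  rw [div_mul_eq_mul_div, div_le_iff₀ hd1zs] at this
  nlinarith
end

section
/- Let g : ℝ → [0,∞) be convex, non-increasing, and nonnegative on all of ℝ, and let f : ℝ → ℝ be C² with f' > 0, (log f')' = g, and lim_{z→-∞} f(z) = -∞. Then g is identically 0, and consequently f is affine: f(z) = f(z') + f'(z')(z - z') for all z, z' ∈ ℝ. -/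
/-- Key step of Theorem 4.2: let `g : ℝ → [0,∞)` be convex, non-increasing, and
nonnegative on all of `ℝ`, and `f : ℝ → ℝ` be `C²` with `f' > 0`, `(log f')' = g`,
and `f(z) → -∞` as `z → -∞`. Then `g ≡ 0` and `f` is affine:
`f(z) = f(z') + f'(z')(z - z')` for all `z, z'`. -/
theorem stmt_14 (g f : ℝ → ℝ)
    (hgconv : ConvexOn ℝ Set.univ g) (hganti : Antitone g) (hg0 : ∀ z, 0 ≤ g z)
    (hf : ContDiff ℝ 2 f) (hf' : ∀ z, 0 < deriv f z)
    (hlog : ∀ z, deriv (fun w => Real.log (deriv f w)) z = g z)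
    (hbot : Filter.Tendsto f Filter.atBot Filter.atBot) :
    (∀ z, g z = 0) ∧ ∀ z z' : ℝ, f z = f z' + deriv f z' * (z - z') := by
  have hfd : Differentiable ℝ f := hf.differentiable (by norm_num)
  have hdf : Differentiable ℝ (deriv f) := by
    have h2 : ContDiff ℝ ((1 : WithTop ℕ∞) + 1) f := by
      rw [show ((1 : WithTop ℕ∞) + 1) = 2 from by norm_num]
      exact hf
    exact (contDiff_succ_iff_deriv.mp h2).2.2.differentiable one_ne_zero
  have hlogdiff : Differentiable ℝ (fun w => Real.log (deriv f w)) :=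
    fun z => ((hdf z).log (ne_of_gt (hf' z)))
  have hlogHas : ∀ z, HasDerivAt (fun w => Real.log (deriv f w)) (g z) z := by
    intro z
    have := (hlogdiff z).hasDerivAt
    rwa [hlog z] at this
  have hgz : ∀ z, g z = 0 := by
    intro z₀
    by_contra hc
    set c := g z₀ with hcdef
    have hcpos : 0 < c := lt_of_le_of_ne (hg0 z₀) (Ne.symm hc)
    -- step 1 : log (f' z) ≤ log (f' z₀) + c * (z - z₀) for z ≤ z₀
    set ψ : ℝ → ℝ := fun z => Real.log (deriv f z) - c * z with hψ
    have hψHas : ∀ z, HasDerivAt ψ (g z - c) z := by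
      intro z
      have h1 : HasDerivAt (fun z : ℝ => c * z) c z := by
        simpa using (hasDerivAt_id z).const_mul c
      exact (hlogHas z).sub h1
    have hψmono : MonotoneOn ψ (Set.Iic z₀) := by
      apply monotoneOn_of_hasDerivWithinAt_nonneg (convex_Iic z₀)
        (fun x _ => (hψHas x).continuousAt.continuousWithinAt)
        (fun x hx => (hψHas x).hasDerivWithinAt)
      intro x hx
      rw [interior_Iic] at hx
      have := hganti (le_of_lt hx)
      simpa using this
    have hlogle : ∀ z ≤ z₀, Real.log (deriv f z) ≤ Real.log (deriv f z₀) + c * (z - z₀) := by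
      intro z hz
      have := hψmono (Set.mem_Iic.mpr hz) (Set.mem_Iic.mpr le_rfl) hz
      simp only [hψ] at this
      nlinarith [this]
    have hfle : ∀ z ≤ z₀, deriv f z ≤ deriv f z₀ * Real.exp (c * (z - z₀)) := by
      intro z hz
      have h := hlogle z hz
      have := Real.exp_le_exp.mpr h
      rwa [Real.exp_log (hf' z), Real.exp_add, Real.exp_log (hf' z₀)] at this
    -- step 2 : G := (f' z₀ / c) * exp (c * (z - z₀)) - f z is monotone on Iic z₀
    set G : ℝ → ℝ := fun z => (deriv f z₀ / c) * Real.exp (c * (z - z₀)) - f z with hG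
    have hGHas : ∀ z, HasDerivAt G (deriv f z₀ * Real.exp (c * (z - z₀)) - deriv f z) z := by
      intro z
      have h1 : HasDerivAt (fun z : ℝ => c * (z - z₀)) c z := by
        simpa using ((hasDerivAt_id z).sub_const z₀).const_mul c
      have h2 : HasDerivAt (fun z : ℝ => Real.exp (c * (z - z₀)))
          (Real.exp (c * (z - z₀)) * c) z := h1.exp
      have h3 := (h2.const_mul (deriv f z₀ / c)).sub (hfd z).hasDerivAt
      have : deriv f z₀ / c * (Real.exp (c * (z - z₀)) * c) - deriv f z
          = deriv f z₀ * Real.exp (c * (z - z₀)) - deriv f z := by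
        field_simp
      rwa [this] at h3
    have hGmono : MonotoneOn G (Set.Iic z₀) := by
      apply monotoneOn_of_hasDerivWithinAt_nonneg (convex_Iic z₀)
        (fun x _ => (hGHas x).continuousAt.continuousWithinAt)
        (fun x hx => (hGHas x).hasDerivWithinAt)
      intro x hx
      rw [interior_Iic] at hx
      have := hfle x (le_of_lt hx)
      linarith
    have hlb : ∀ z ≤ z₀, f z₀ - deriv f z₀ / c ≤ f z := by
      intro z hz
      have h := hGmono (Set.mem_Iic.mpr hz) (Set.mem_Iic.mpr le_rfl) hz
      simp only [hG] at h
      have hexp : 0 < Real.exp (c * (z - z₀)) := Real.exp_pos _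
      have hAc : 0 < deriv f z₀ / c := div_pos (hf' z₀) hcpos
      have hz0 : (z₀ : ℝ) - z₀ = 0 := by ring
      rw [hz0, mul_zero, Real.exp_zero, mul_one] at h
      nlinarith
    obtain ⟨z, hz1, hz2⟩ := ((hbot.eventually
      (Filter.eventually_lt_atBot (f z₀ - deriv f z₀ / c))).and
      (Filter.eventually_le_atBot z₀)).exists
    exact absurd (hlb z hz2) (not_le.mpr hz1)
  refine ⟨hgz, ?_⟩
  -- log f' has zero derivative, hence f' is constant
  have hconstlog : ∀ z z' : ℝ, Real.log (deriv f z) = Real.log (deriv f z') :=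
    is_const_of_deriv_eq_zero hlogdiff (fun z => (hlog z).trans (hgz z))
  have hconst : ∀ z z' : ℝ, deriv f z = deriv f z' := by
    intro z z'
    have := congrArg Real.exp (hconstlog z z')
    rwa [Real.exp_log (hf' z), Real.exp_log (hf' z')] at this
  intro z z'
  set H : ℝ → ℝ := fun w => f w - deriv f z' * w with hH
  have hHd : Differentiable ℝ H := hfd.sub ((differentiable_id.const_mul _))
  have hHderiv : ∀ w, deriv H w = 0 := by
    intro w
    have h1 : HasDerivAt H (deriv f w - deriv f z' * 1) w := by
      exact (hfd w).hasDerivAt.sub ((hasDerivAt_id w).const_mul _)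
    rw [h1.deriv, hconst w z']; ring
  have := is_const_of_deriv_eq_zero hHd hHderiv z z'
  simp only [hH] at this
  linarith
end
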